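/- arXiv:2102.07283 — 7 statements merged into one kernel-verified Lean document; each statement's English description precedes it below -/
import Mathlib

section
/- Let f : B(0,1) ⊆ ℝⁿ → ℝⁿ be C¹ on the open unit ball with f(0) = 0, and suppose there is c₅ > 0 such that the minimum norm m(Df(x)) = inf_{v≠0} |Df(x)v|/|v| satisfies m(Df(x)) > c₅ for all x ∈ B(0,1). If c₅ > 2r, then the ball B(0,r) is contained in f(B(0,1)). -/
open Metric Set
open scoped NNReal

/-- Local surjectivity: near each point of the unit ball, `f` covers a fixed fraction
of balls around `f x`. -/
lemma stmt_0_key (n : ℕ) (f : EuclideanSpace ℝ (Fin n) → EuclideanSpace ℝ (Fin n))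
    (hf : ContDiffOn ℝ 1 f (ball 0 1)) (c₅ : ℝ) (hc₅ : 0 < c₅)
    (hder : ∀ x ∈ ball (0 : EuclideanSpace ℝ (Fin n)) 1,
      ∀ v : EuclideanSpace ℝ (Fin n), v ≠ 0 → c₅ * ‖v‖ < ‖fderivWithin ℝ f (ball 0 1) x v‖)
    (x : EuclideanSpace ℝ (Fin n)) (hx : x ∈ ball (0 : EuclideanSpace ℝ (Fin n)) 1) :
    ∃ ε > 0, ∀ ε', 0 ≤ ε' → ε' ≤ ε →
      ∀ z ∈ closedBall (f x) (c₅ / 2 * ε'), ∃ x' ∈ closedBall x ε', f x' = z := by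
  have hcd : ContDiffAt ℝ 1 f x := hf.contDiffAt (isOpen_ball.mem_nhds hx)
  have hstrict : HasStrictFDerivAt f (fderiv ℝ f x) x := hcd.hasStrictFDerivAt one_ne_zero
  set A := fderiv ℝ f x with hA
  have hAv : ∀ v : EuclideanSpace ℝ (Fin n), v ≠ 0 → c₅ * ‖v‖ < ‖A v‖ := by
    intro v hv
    have := hder x hx v hv
    rwa [fderivWithin_of_isOpen isOpen_ball hx] at this
  have hAle : ∀ v : EuclideanSpace ℝ (Fin n), c₅ * ‖v‖ ≤ ‖A v‖ := by
    intro v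
    by_cases hv : v = 0
    · simp [hv]
    · exact (hAv v hv).le
  have hker : LinearMap.ker (A : EuclideanSpace ℝ (Fin n) →ₗ[ℝ] EuclideanSpace ℝ (Fin n)) = ⊥ := by
    rw [LinearMap.ker_eq_bot']
    intro v hv
    by_contra h
    have := hAv v h
    rw [show A v = 0 from hv] at this
    simp only [norm_zero] at this
    nlinarith [norm_pos_iff.mpr h, this]
  have hinj : Function.Injective (A : EuclideanSpace ℝ (Fin n) →ₗ[ℝ]
      EuclideanSpace ℝ (Fin n)) := LinearMap.ker_eq_bot.mp hker
  have hsurj : LinearMap.range (A : EuclideanSpace ℝ (Fin n) →ₗ[ℝ] EuclideanSpace ℝ (Fin n)) = ⊤ :=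
    LinearMap.range_eq_top.mpr (LinearMap.injective_iff_surjective.mp hinj)
  set e := ContinuousLinearEquiv.ofBijective A hker hsurj with he
  have heA : ∀ v, e v = A v := fun v => rfl
  let rinv : A.NonlinearRightInverse :=
    { toFun := e.symm
      nnnorm := Real.toNNReal c₅⁻¹
      bound' := by
        intro z
        have h1 : A (e.symm z) = z := by rw [← heA]; exact e.apply_symm_apply z
        have h2 : c₅ * ‖e.symm z‖ ≤ ‖z‖ := by
          have := hAle (e.symm z); rwa [h1] at this
        rw [Real.coe_toNNReal _ (inv_pos.mpr hc₅).le]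
        rw [inv_mul_eq_div, le_div_iff₀ hc₅]
        linarith
      right_inv' := by
        intro z
        rw [← heA]; exact e.apply_symm_apply z }
  have hc2 : (0:ℝ) ≤ c₅ / 2 := by positivity
  set cnn : ℝ≥0 := Real.toNNReal (c₅ / 2) with hcnn
  have hcnn' : (cnn : ℝ) = c₅ / 2 := Real.coe_toNNReal _ hc2
  have hcpos : (0 : ℝ≥0) < cnn := by
    rw [← NNReal.coe_lt_coe, hcnn']
    positivity
  obtain ⟨t, ht_nhds, happrox⟩ :=
    hstrict.approximates_deriv_on_nhds (c := cnn) (Or.inr hcpos)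
  have hmem : t ∩ ball (0 : EuclideanSpace ℝ (Fin n)) 1 ∈ nhds x :=
    Filter.inter_mem ht_nhds (isOpen_ball.mem_nhds hx)
  obtain ⟨ε, hε0, hεsub⟩ := (Metric.nhds_basis_closedBall.mem_iff).mp hmem
  refine ⟨ε, hε0, ?_⟩
  intro ε' hε'0 hε'ε z hz
  have hsub' : closedBall x ε' ⊆ t :=
    (closedBall_subset_closedBall hε'ε).trans (hεsub.trans inter_subset_left)
  have happ' : ApproximatesLinearOn f A (closedBall x ε') cnn :=
    happrox.mono_set hsub'
  have hsurjon := happ'.surjOn_closedBall_of_nonlinearRightInverse rinv hε'0 subset_rfl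
  have hradius : c₅ / 2 * ε' ≤ ((rinv.nnnorm : ℝ)⁻¹ - (cnn : ℝ)) * ε' := by
    have h1 : (rinv.nnnorm : ℝ) = c₅⁻¹ := Real.coe_toNNReal _ (inv_pos.mpr hc₅).le
    rw [h1, hcnn', inv_inv]
    nlinarith
  have hz' : z ∈ closedBall (f x) (((rinv.nnnorm : ℝ)⁻¹ - (cnn : ℝ)) * ε') :=
    closedBall_subset_closedBall hradius hz
  obtain ⟨x', hx', hfx'⟩ := hsurjon hz'
  exact ⟨x', hx', hfx'⟩

/-- Covering lemma: a C¹ map on the unit ball of ℝⁿ fixing the origin whose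
derivative has minimum norm greater than `c₅ > 2r` covers the ball of radius `r`. -/
theorem stmt_0 (n : ℕ) (f : EuclideanSpace ℝ (Fin n) → EuclideanSpace ℝ (Fin n))
    (hf : ContDiffOn ℝ 1 f (ball 0 1)) (hf0 : f 0 = 0) (c₅ r : ℝ) (hc₅ : 0 < c₅)
    (hder : ∀ x ∈ ball (0 : EuclideanSpace ℝ (Fin n)) 1,
      ∀ v : EuclideanSpace ℝ (Fin n), v ≠ 0 → c₅ * ‖v‖ < ‖fderivWithin ℝ f (ball 0 1) x v‖)
    (hr : c₅ > 2 * r) :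
    ball (0 : EuclideanSpace ℝ (Fin n)) r ⊆ f '' ball 0 1 := by
  intro y hy
  rw [mem_ball, dist_zero_right] at hy
  have hr0 : 0 < r := lt_of_le_of_lt (norm_nonneg y) hy
  by_cases hy0 : y = 0
  · exact ⟨0, mem_ball_self one_pos, by rw [hf0, hy0]⟩
  have hy0' : 0 < ‖y‖ := norm_pos_iff.mpr hy0
  set s : ℝ := 2 * ‖y‖ / c₅ with hs_def
  have hs0 : 0 < s := by positivity
  have hs1 : s < 1 := by
    rw [hs_def, div_lt_one hc₅]
    linarith
  -- The set of parameters `t` for which `t • y` is achieved within the ball of radius `t*s`.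
  set C : Set (ℝ × EuclideanSpace ℝ (Fin n)) :=
    {p | p.1 ∈ Icc (0:ℝ) 1 ∧ ‖p.2‖ ≤ p.1 * s ∧ f p.2 = p.1 • y} with hC_def
  have hCsub : C ⊆ Icc (0:ℝ) 1 ×ˢ closedBall 0 s := by
    rintro ⟨t, x⟩ ⟨ht, hx, -⟩
    refine ⟨ht, ?_⟩
    rw [mem_closedBall, dist_zero_right]
    calc ‖x‖ ≤ t * s := hx
      _ ≤ 1 * s := by nlinarith [ht.1, ht.2]
      _ = s := one_mul s
  have hKcompact : IsCompact (Icc (0:ℝ) 1 ×ˢ closedBall (0 : EuclideanSpace ℝ (Fin n)) s) :=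
    isCompact_Icc.prod (isCompact_closedBall _ _)
  have hCclosed : IsClosed C := by
    have hcont : ContinuousOn
        (fun p : ℝ × EuclideanSpace ℝ (Fin n) => f p.2 - p.1 • y)
        (Icc (0:ℝ) 1 ×ˢ closedBall 0 s) := by
      have hmaps : MapsTo (fun p : ℝ × EuclideanSpace ℝ (Fin n) => p.2)
          (Icc (0:ℝ) 1 ×ˢ closedBall 0 s) (ball 0 1) := by
        rintro ⟨t, x⟩ ⟨-, hx⟩
        rw [mem_closedBall, dist_zero_right] at hx
        rw [mem_ball, dist_zero_right]
        exact lt_of_le_of_lt hx hs1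
      exact ((hf.continuousOn.comp continuous_snd.continuousOn hmaps).sub
        ((continuous_fst.smul continuous_const).continuousOn))
    have h1 : IsClosed ((Icc (0:ℝ) 1 ×ˢ closedBall (0 : EuclideanSpace ℝ (Fin n)) s) ∩
        (fun p : ℝ × EuclideanSpace ℝ (Fin n) => f p.2 - p.1 • y) ⁻¹' {0}) :=
      hcont.preimage_isClosed_of_isClosed
        (isClosed_Icc.prod isClosed_closedBall) isClosed_singleton
    have h2 : IsClosed {p : ℝ × EuclideanSpace ℝ (Fin n) | ‖p.2‖ ≤ p.1 * s} := by
      apply isClosed_le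
      · exact continuous_snd.norm
      · exact continuous_fst.mul continuous_const
    have : C = ((Icc (0:ℝ) 1 ×ˢ closedBall (0 : EuclideanSpace ℝ (Fin n)) s) ∩
        (fun p : ℝ × EuclideanSpace ℝ (Fin n) => f p.2 - p.1 • y) ⁻¹' {0}) ∩
        {p : ℝ × EuclideanSpace ℝ (Fin n) | ‖p.2‖ ≤ p.1 * s} := by
      ext ⟨t, x⟩
      simp only [hC_def, mem_setOf_eq, mem_inter_iff, mem_preimage, mem_singleton_iff,
        sub_eq_zero]
      constructor
      · rintro ⟨ht, hx, hfx⟩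
        exact ⟨⟨hCsub ⟨ht, hx, hfx⟩, hfx⟩, hx⟩
      · rintro ⟨⟨⟨ht, -⟩, hfx⟩, hx⟩
        exact ⟨ht, hx, hfx⟩
    rw [this]
    exact (h1.inter h2)
  have hCcompact : IsCompact C := hKcompact.of_isClosed_subset hCclosed hCsub
  set S : Set ℝ := Prod.fst '' C with hS_def
  have hScompact : IsCompact S := hCcompact.image continuous_fst
  have hSne : S.Nonempty := ⟨0, ⟨(0, 0), ⟨⟨le_refl 0, zero_le_one⟩, by simp, by simp [hf0]⟩, rfl⟩⟩
  have hTS : sSup S ∈ S := hScompact.sSup_mem hSne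
  obtain ⟨⟨t₀, x₀⟩, ⟨hTIcc, hx₀norm, hx₀f⟩, ht₀⟩ := hTS
  have ht₀' : t₀ = sSup S := ht₀
  have hT1 : t₀ = 1 := by
    by_contra hT1
    have hTlt : t₀ < 1 := lt_of_le_of_ne hTIcc.2 hT1
    have hx₀ball : x₀ ∈ ball (0 : EuclideanSpace ℝ (Fin n)) 1 := by
      rw [mem_ball, dist_zero_right]
      calc ‖x₀‖ ≤ t₀ * s := hx₀norm
        _ ≤ 1 * s := by nlinarith [hTIcc.1]
        _ < 1 := by rw [one_mul]; exact hs1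
    obtain ⟨ε, hε0, hεkey⟩ := stmt_0_key n f hf c₅ hc₅ hder x₀ hx₀ball
    set ε' : ℝ := min ε ((1 - t₀) * s) with hε'_def
    have hε'0 : 0 < ε' := lt_min hε0 (by nlinarith)
    set t' : ℝ := t₀ + ε' / s with ht'_def
    have ht'T : t₀ < t' := by
      rw [ht'_def]
      have : 0 < ε' / s := div_pos hε'0 hs0
      linarith
    have ht'1 : t' ≤ 1 := by
      rw [ht'_def]
      have h1 : ε' ≤ (1 - t₀) * s := min_le_right _ _
      have h2 : ε' / s ≤ 1 - t₀ := by
        rw [div_le_iff₀ hs0]; linarith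
      linarith
    have hz : t' • y ∈ closedBall (f x₀) (c₅ / 2 * ε') := by
      rw [mem_closedBall, hx₀f, dist_eq_norm, ← sub_smul, norm_smul,
        Real.norm_eq_abs, abs_of_pos (by linarith : (0:ℝ) < t' - t₀)]
      have : (t' - t₀) * ‖y‖ = ε' / s * ‖y‖ := by rw [ht'_def]; ring
      rw [this]
      have hys : ‖y‖ / s = c₅ / 2 := by
        rw [hs_def]
        field_simp
      have : ε' / s * ‖y‖ = c₅ / 2 * ε' := by
        rw [div_mul_eq_mul_div, mul_comm, ← div_mul_eq_mul_div, hys]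
      rw [this]
    obtain ⟨x', hx'mem, hx'f⟩ := hεkey ε' hε'0.le (min_le_left _ _) (t' • y) hz
    have hx'norm : ‖x'‖ ≤ t' * s := by
      have h1 : ‖x' - x₀‖ ≤ ε' := by
        rw [mem_closedBall, dist_eq_norm] at hx'mem; exact hx'mem
      calc ‖x'‖ = ‖x₀ + (x' - x₀)‖ := by rw [add_sub_cancel]
        _ ≤ ‖x₀‖ + ‖x' - x₀‖ := norm_add_le _ _
        _ ≤ t₀ * s + ε' := add_le_add hx₀norm h1
        _ = (t₀ + ε' / s) * s := by field_simp
        _ = t' * s := by rw [ht'_def]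
    have ht'S : t' ∈ S := ⟨(t', x'), ⟨⟨by linarith [hTIcc.1], ht'1⟩, hx'norm, hx'f⟩, rfl⟩
    have : t' ≤ t₀ := ht₀' ▸ le_csSup hScompact.bddAbove ht'S
    linarith
  subst hT1
  refine ⟨x₀, ?_, ?_⟩
  · rw [mem_ball, dist_zero_right]
    calc ‖x₀‖ ≤ 1 * s := hx₀norm
      _ < 1 := by rw [one_mul]; exact hs1
  · rw [hx₀f, one_smul]
end

section
/- Let (t,v), (t',v') ∈ (ℝ \ {0}) × (ℝ/2πℤ), with real representatives w, w' of v, v'. The subgroup E = { m·(t,v) + n·(t',v') : m, n ∈ ℤ } is dense in ℝ × (ℝ/2πℤ) if and only if there is no (β₁, β₂) ∈ ℤ² \ {0} such that β₁·(t/t') + β₂·(w − w'·(t/t'))·(1/(2π)) ∈ ℤ (with the normalization that the circle has circumference 2π). -/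
open Real

section KroneckerAux

open Set Function AddSubgroup Filter Topology

lemma small_eq {a : ℝ} (ha : 0 < a) {x y : ℝ} (h : (x : AddCircle a) = (y : AddCircle a))
    (hxy : |x - y| < a) : x = y := by
  rw [QuotientAddGroup.eq_iff_sub_mem, AddSubgroup.mem_zmultiples_iff] at h
  obtain ⟨n, hn⟩ := h
  have habs : |(n : ℝ)| * a < a := by
    rw [← hn] at hxy
    rw [zsmul_eq_mul, abs_mul, abs_of_pos ha] at hxy
    exact hxy
  have hn0 : n = 0 := by
    by_contra h0
    have : (1 : ℝ) ≤ |(n : ℝ)| := by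
      rw [← Int.cast_abs]
      exact_mod_cast Int.one_le_abs (by omega)
    nlinarith
  rw [hn0] at hn
  simp only [zero_zsmul] at hn
  have : x - y = 0 := hn.symm
  linarith [this]

lemma hom_linear {a : ℝ} (ha : 0 < a) (Φ : ℝ →+ AddCircle a)
    (hΦ : Continuous Φ) : ∃ c : ℝ, ∀ x : ℝ, Φ x = ↑(c * x) := by
  haveI : Fact (0 < a) := ⟨ha⟩
  set F : AddCircle a → ℝ := fun q => (AddCircle.equivIoc a (-(a/2)) q : ℝ) with hF
  have hFcoe : ∀ q : AddCircle a, ((F q : ℝ) : AddCircle a) = q := fun q =>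
    (AddCircle.equivIoc a (-(a/2))).symm_apply_apply q
  set G : ℝ → ℝ := fun x => F (Φ x) with hGdef
  have hGcoe : ∀ x, ((G x : ℝ) : AddCircle a) = Φ x := fun x => hFcoe _
  have hGmem : ∀ x, G x ∈ Ioc (-(a/2)) (a/2) := by
    intro x
    have := (AddCircle.equivIoc a (-(a/2)) (Φ x)).2
    exact ⟨this.1, this.2.trans (le_of_eq (by ring))⟩
  -- small values near 0
  obtain ⟨δ, hδpos, hδ⟩ : ∃ δ > 0, ∀ x : ℝ, |x| ≤ δ → |G x| < a/4 := by
    have hU : IsOpen (((↑) : ℝ → AddCircle a) '' Ioo (-(a/4)) (a/4)) :=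
      (QuotientAddGroup.isOpenMap_coe (N := AddSubgroup.zmultiples a)) _ isOpen_Ioo
    have h0 : (0 : AddCircle a) ∈ ((↑) : ℝ → AddCircle a) '' Ioo (-(a/4)) (a/4) :=
      ⟨0, ⟨by linarith, by linarith⟩, by simp⟩
    have hnhds : Φ ⁻¹' (((↑) : ℝ → AddCircle a) '' Ioo (-(a/4)) (a/4)) ∈ 𝓝 (0 : ℝ) :=
      hΦ.continuousAt.preimage_mem_nhds (hU.mem_nhds (by simpa [map_zero] using h0))
    obtain ⟨ε, hε, hball⟩ := Metric.mem_nhds_iff.mp hnhds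
    refine ⟨ε/2, by linarith, fun x hx => ?_⟩
    have hxmem : x ∈ Metric.ball (0:ℝ) ε := by
      simp only [Metric.mem_ball, Real.dist_eq, sub_zero]
      calc |x| ≤ ε/2 := hx
      _ < ε := by linarith
    obtain ⟨s, hs, hsx⟩ := hball hxmem
    have : G x = s := by
      apply small_eq ha (by rw [hGcoe, ← hsx])
      have h1 := (hGmem x).1; have h2 := (hGmem x).2
      rw [abs_sub_lt_iff]
      rcases hs with ⟨hs1, hs2⟩
      constructor <;> linarith
    rw [this, abs_lt]
    exact ⟨hs.1, hs.2⟩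
  have hadd : ∀ x y : ℝ, |G x| < a/4 → |G y| < a/4 → G (x+y) = G x + G y := by
    intro x y hx hy
    have hc : ((G (x+y) : ℝ) : AddCircle a) = ((G x + G y : ℝ) : AddCircle a) := by
      rw [hGcoe, map_add, AddCircle.coe_add, hGcoe x, hGcoe y]
    apply small_eq ha hc
    have h1 := (hGmem (x+y)).1; have h2 := (hGmem (x+y)).2
    rw [abs_lt] at hx hy
    rw [abs_sub_lt_iff]
    constructor <;> [skip; skip] <;> rcases hx with ⟨hx1, hx2⟩ <;> rcases hy with ⟨hy1, hy2⟩ <;> linarith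
  have hG0 : G 0 = 0 := by
    apply small_eq ha (by rw [hGcoe, map_zero]; norm_num)
    have h1 := (hGmem 0).1; have h2 := (hGmem 0).2
    rw [abs_sub_lt_iff]
    constructor <;> linarith
  have hdsmall : ∀ n : ℕ, |G (δ / 2^n)| < a/4 := by
    intro n
    apply hδ
    rw [abs_of_pos (by positivity)]
    calc δ / 2^n ≤ δ / 1 := by
          apply div_le_div_of_nonneg_left hδpos.le one_pos
          exact one_le_pow₀ one_le_two
      _ = δ := div_one δ
  have hdle : ∀ n : ℕ, δ / 2^n ≤ δ := by
    intro n
    calc δ / 2^n ≤ δ / 1 := by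
          apply div_le_div_of_nonneg_left hδpos.le one_pos
          exact one_le_pow₀ one_le_two
      _ = δ := div_one δ
  have hpow : ∀ n : ℕ, G (δ / 2^n) = G δ / 2^n := by
    intro n
    induction n with
    | zero => simp
    | succ k ih =>
      have hsplit : δ / 2^k = δ / 2^(k+1) + δ / 2^(k+1) := by ring
      have := hadd _ _ (hdsmall (k+1)) (hdsmall (k+1))
      rw [← hsplit] at this
      rw [ih] at this
      have h2 : G (δ / 2^(k+1)) = G δ / 2^k / 2 := by linarith
      rw [h2]; ring
  have hmul : ∀ n : ℕ, ∀ m : ℕ, m ≤ 2^n → G ((m : ℝ) * (δ / 2^n)) = (m : ℝ) * G (δ / 2^n) := by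
    intro n m
    induction m with
    | zero => intro _; simpa using hG0
    | succ k ih =>
      intro hk
      have hk' : k ≤ 2^n := le_of_lt (Nat.lt_of_succ_le hk)
      have hkx : |(k : ℝ) * (δ / 2^n)| ≤ δ := by
        rw [abs_of_nonneg (by positivity)]
        calc (k : ℝ) * (δ / 2^n) ≤ (2^n : ℝ) * (δ / 2^n) := by
              apply mul_le_mul_of_nonneg_right _ (by positivity)
              exact_mod_cast hk'
          _ = δ := by field_simp
      have hsum := hadd _ _ (hδ _ hkx) (hdsmall n)
      push_cast
      have : ((k : ℝ) + 1) * (δ / 2^n) = (k : ℝ) * (δ / 2^n) + δ / 2^n := by ring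
      rw [this, hsum, ih hk']
      ring
  set c : ℝ := G δ / δ with hc
  have hlin : ∀ x : ℝ, 0 ≤ x → x ≤ δ → G x = c * x := by
    intro x hx0 hxδ
    have hcontG : ContinuousAt G x := by
      have hx4 : |G x| < a/4 := hδ x (abs_le.mpr ⟨by linarith, hxδ⟩)
      have hne : Φ x ≠ ((-(a/2) : ℝ) : AddCircle a) := by
        intro hcon
        have heq : ((G x : ℝ) : AddCircle a) = ((-(a/2) : ℝ) : AddCircle a) := by
          rw [hGcoe]; exact hcon
        have := small_eq ha heq (by rw [abs_lt] at hx4; rw [abs_sub_lt_iff]; constructor <;> linarith)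
        rw [abs_lt] at hx4
        rw [this] at hx4
        rcases hx4 with ⟨h1, h2⟩
        linarith
      exact continuous_subtype_val.continuousAt.comp
        ((AddCircle.continuousAt_equivIoc a (-(a/2)) hne).comp hΦ.continuousAt)
    set u : ℕ → ℝ := fun k => (⌊x * 2^k / δ⌋₊ : ℝ) * (δ / 2^k) with hu
    have hfloor_le : ∀ k : ℕ, (⌊x * 2^k / δ⌋₊ : ℕ) ≤ 2^k := by
      intro k
      have : x * 2^k / δ ≤ ((2^k : ℕ) : ℝ) := by
        push_cast
        rw [div_le_iff₀ hδpos]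
        nlinarith [pow_pos (two_pos (α := ℝ)) k]
      calc ⌊x * 2^k / δ⌋₊ ≤ ⌊((2^k : ℕ) : ℝ)⌋₊ := Nat.floor_le_floor this
        _ = 2^k := Nat.floor_natCast _
    have hGu : ∀ k, G (u k) = c * u k := by
      intro k
      rw [hu]
      simp only
      rw [hmul k _ (hfloor_le k), hpow k, hc]
      field_simp
    have hu_tendsto : Tendsto u atTop (𝓝 x) := by
      have hdist : ∀ k, |u k - x| ≤ δ / 2^k := by
        intro k
        have h2k : (0:ℝ) < 2^k := by positivity
        set m : ℝ := (⌊x * 2 ^ k / δ⌋₊ : ℝ) with hm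
        have hfl : m ≤ x * 2^k / δ := Nat.floor_le (by positivity)
        have hfu : x * 2^k / δ < m + 1 := Nat.lt_floor_add_one _
        have A : m * δ ≤ x * 2^k := (le_div_iff₀ hδpos).mp hfl
        have B : x * 2^k < (m+1) * δ := (div_lt_iff₀ hδpos).mp hfu
        have hul : m * (δ / 2^k) ≤ x := by
          rw [show m * (δ / 2^k) = m*δ/2^k by ring, div_le_iff₀ h2k]
          linarith
        have huu : x < m * (δ / 2^k) + δ/2^k := by
          have hB : x < ((m+1)*δ)/2^k := by
            rw [lt_div_iff₀ h2k]; linarith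
          calc x < ((m+1)*δ)/2^k := hB
            _ = m * (δ / 2^k) + δ/2^k := by ring
        have hude : u k = m * (δ / 2^k) := by rw [hu]
        rw [hude, abs_le]
        constructor <;> [linarith; linarith]
      have h0 : Tendsto (fun k : ℕ => δ / 2^k) atTop (𝓝 0) := by
        simpa using tendsto_const_nhds.div_atTop (tendsto_pow_atTop_atTop_of_one_lt (by norm_num : (1:ℝ) < 2))
      rw [tendsto_iff_dist_tendsto_zero]
      apply squeeze_zero (fun k => dist_nonneg) (fun k => ?_) h0
      rw [Real.dist_eq]
      exact hdist k
    have h1 : Tendsto (G ∘ u) atTop (𝓝 (G x)) := hcontG.tendsto.comp hu_tendsto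
    have h2 : Tendsto (G ∘ u) atTop (𝓝 (c * x)) := by
      have : (G ∘ u) = fun k => c * u k := by funext k; exact hGu k
      rw [this]
      exact (tendsto_const_nhds.mul hu_tendsto)
    exact tendsto_nhds_unique h1 h2
  refine ⟨c, ?_⟩
  have hsmallΦ : ∀ x : ℝ, |x| ≤ δ → Φ x = ↑(c * x) := by
    intro x hx
    rcases le_or_gt 0 x with h | h
    · rw [← hGcoe x, hlin x h (abs_le.mp hx).2]
    · have hneg : Φ (-x) = ↑(c * (-x)) := by
        rw [← hGcoe (-x), hlin (-x) (by linarith) (by rw [abs_of_neg h] at hx; linarith)]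
      have : Φ x = - Φ (-x) := by rw [← map_neg, neg_neg]
      rw [this, hneg, ← AddCircle.coe_neg]
      congr 1
      ring
  intro x
  obtain ⟨n, hn⟩ : ∃ n : ℕ, |x| ≤ 2^n * δ := by
    obtain ⟨n, hn⟩ := pow_unbounded_of_one_lt (|x|/δ) (by norm_num : (1:ℝ) < 2)
    refine ⟨n, ?_⟩
    rw [div_lt_iff₀ hδpos] at hn
    linarith
  have h2n : (0:ℝ) < 2^n := by positivity
  have hs : |x / 2^n| ≤ δ := by
    rw [abs_div, abs_of_pos h2n, div_le_iff₀ h2n]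
    linarith
  have hx2 : Φ x = (2^n : ℕ) • Φ (x / 2^n) := by
    rw [← map_nsmul]
    congr 1
    rw [nsmul_eq_mul]
    push_cast
    field_simp
  rw [hx2, hsmallΦ _ hs, ← AddCircle.coe_nsmul]
  congr 1
  rw [nsmul_eq_mul]
  push_cast
  field_simp

end KroneckerAux

open Real Set Function AddSubgroup Filter Topology in
/-- Density criterion for the subgroup generated by two elements of ℝ × (ℝ/2πℤ). -/
theorem stmt_2 (t t' w w' : ℝ) (ht : t ≠ 0) (ht' : t' ≠ 0) :
    Dense {p : ℝ × AddCircle (2 * π) |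
        ∃ m n : ℤ, p = m • ((t, (w : AddCircle (2 * π))) : ℝ × AddCircle (2 * π))
          + n • ((t', (w' : AddCircle (2 * π))) : ℝ × AddCircle (2 * π))} ↔
      ¬ ∃ β : ℤ × ℤ, β ≠ 0 ∧
        ∃ k : ℤ, (β.1 : ℝ) * (t / t') + (β.2 : ℝ) * ((w - w' * (t / t')) / (2 * π)) = k := by
  haveI hfact : Fact (0 < 2*π) := ⟨by positivity⟩
  have hπ : (0:ℝ) < 2*π := hfact.out
  set u : ℝ × AddCircle (2*π) := (t, (w : AddCircle (2*π))) with hu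
  set v : ℝ × AddCircle (2*π) := (t', (w' : AddCircle (2*π))) with hv
  set S : AddSubgroup (ℝ × AddCircle (2*π)) := AddSubgroup.closure {u, v} with hS
  have hEq : {p : ℝ × AddCircle (2 * π) | ∃ m n : ℤ, p = m • u + n • v} = (S : Set (ℝ × AddCircle (2*π))) := by
    ext p
    rw [SetLike.mem_coe, AddSubgroup.mem_closure_pair, Set.mem_setOf_eq]
    exact ⟨fun ⟨m, n, hp⟩ => ⟨m, n, hp.symm⟩, fun ⟨m, n, hp⟩ => ⟨m, n, hp.symm⟩⟩
  simp only [hEq]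
  constructor
  · -- easy direction
    intro hdense
    rintro ⟨β, hβ0, k, hk⟩
    obtain ⟨c, hct, hct'⟩ : ∃ c : ℝ, (c * t + (β.2:ℝ) * w = 2*π*k) ∧
        (c * t' + (β.2:ℝ) * w' = 2*π*β.1) := by
      have hk2 : (β.1:ℝ) * t * (2*π) + (β.2:ℝ) * (w*t' - w'*t) = (k:ℝ) * (t' * (2*π)) := by
        apply mul_right_cancel₀ ht'
        field_simp [pi_ne_zero] at hk
        linear_combination t' * hk
      refine ⟨(2*π*β.1 - β.2*w')/t', ?_, ?_⟩
      · field_simp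
        linear_combination hk2
      · field_simp
        ring
    set χ : ℝ × AddCircle (2*π) → AddCircle (2*π) := fun p => ↑(c * p.1) + β.2 • p.2 with hχ
    have hχcont : Continuous χ := by
      rw [hχ]
      refine Continuous.add (f := fun p : ℝ × AddCircle (2*π) => ((c * p.1 : ℝ) : AddCircle (2*π))) (g := fun p => β.2 • p.2) ?_ ?_
      · exact (AddCircle.continuous_mk' (2*π)).comp (continuous_const.mul continuous_fst)
      · exact (continuous_zsmul β.2).comp continuous_snd
    have hχE : ∀ p ∈ (S : Set (ℝ × AddCircle (2*π))), χ p = 0 := by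
      intro p hp
      rw [SetLike.mem_coe, AddSubgroup.mem_closure_pair] at hp
      obtain ⟨m, n, rfl⟩ := hp
      show (↑(c * (m • u + n • v).1) + β.2 • (m • u + n • v).2 : AddCircle (2*π)) = 0
      have h1 : (m • u + n • v).1 = (m:ℝ) * t + (n:ℝ) * t' := by
        simp [hu, hv, zsmul_eq_mul]
      have h2 : (m • u + n • v).2 = (((m:ℝ) * w + (n:ℝ) * w' : ℝ) : AddCircle (2*π)) := by
        show m • (w : AddCircle (2*π)) + n • (w' : AddCircle (2*π)) = _
        rw [← AddCircle.coe_zsmul, ← AddCircle.coe_zsmul, ← AddCircle.coe_add]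
        push_cast [zsmul_eq_mul]
        norm_num
      rw [h1, h2]
      rw [← AddCircle.coe_zsmul, zsmul_eq_mul, ← AddCircle.coe_add]
      rw [AddCircle.coe_eq_zero_iff]
      refine ⟨m * k + n * β.1, ?_⟩
      rw [zsmul_eq_mul]
      push_cast
      linear_combination (-(m:ℝ)) * hct - (n:ℝ) * hct'
    have hall : ∀ p : ℝ × AddCircle (2*π), χ p = 0 := by
      have heq : χ = fun _ => (0 : AddCircle (2*π)) :=
        hχcont.ext_on hdense continuous_const (fun p hp => hχE p hp)
      intro p
      exact congrFun heq p
    have hπne : ((π : ℝ) : AddCircle (2*π)) ≠ 0 := by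
      intro hcon
      rw [AddCircle.coe_eq_zero_iff] at hcon
      obtain ⟨N, hN⟩ := hcon
      rw [zsmul_eq_mul] at hN
      have h2 : ((2*N - 1 : ℤ) : ℝ) * π = 0 := by push_cast; linarith
      rcases mul_eq_zero.mp h2 with hh | hh
      · have : (2*N - 1 : ℤ) = 0 := by exact_mod_cast hh
        omega
      · exact Real.pi_ne_zero hh
    by_cases hc0 : c = 0
    · have hβ2 : (β.2 : ℝ) ≠ 0 := by
        intro hb2
        have h1 := hct'
        rw [hc0, hb2] at h1
        have hb1 : (β.1 : ℝ) = 0 := by nlinarith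
        apply hβ0
        have e1 : β.1 = 0 := by exact_mod_cast hb1
        have e2 : β.2 = 0 := by exact_mod_cast hb2
        exact Prod.ext_iff.mpr ⟨e1, e2⟩
      have h0 := hall (0, ((π/(β.2:ℝ) : ℝ) : AddCircle (2*π)))
      have h0' : (↑(c * 0) + β.2 • ((π/(β.2:ℝ) : ℝ) : AddCircle (2*π)) : AddCircle (2*π)) = 0 := h0
      rw [mul_zero, ← AddCircle.coe_zsmul, zsmul_eq_mul] at h0'
      have hval : (β.2 : ℝ) * (π/(β.2:ℝ)) = π := by field_simp
      rw [hval] at h0'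
      apply hπne
      simpa using h0'
    · have h0 := hall (π/c, (0 : AddCircle (2*π)))
      have h0' : (↑(c * (π/c)) + β.2 • (0 : AddCircle (2*π)) : AddCircle (2*π)) = 0 := h0
      rw [smul_zero, add_zero] at h0'
      have hval : c * (π/c) = π := by field_simp
      rw [hval] at h0'
      exact hπne h0'
  · intro h
    have hrel : ∀ b1 b2 k : ℤ, (b1:ℝ) * (t/t') + (b2:ℝ) * ((w - w'*(t/t'))/(2*π)) = (k:ℝ) →
        b1 = 0 ∧ b2 = 0 := by
      intro b1 b2 k hk
      by_contra hcon
      refine h ⟨(b1, b2), fun hb => hcon ?_, k, hk⟩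
      rw [Prod.mk_eq_zero] at hb
      exact hb
    have hind : ∀ m n : ℤ, (m:ℝ) * t + (n:ℝ) * t' = 0 → m = 0 ∧ n = 0 := by
      intro m n hmn
      have hq : (m:ℝ) * (t/t') + ((0:ℤ):ℝ) * ((w - w'*(t/t'))/(2*π)) = ((-n : ℤ):ℝ) := by
        push_cast
        field_simp
        linear_combination (2*π) * hmn
      obtain ⟨hm, -⟩ := hrel m 0 (-n) hq
      refine ⟨hm, ?_⟩
      rw [hm] at hmn
      push_cast at hmn
      rw [zero_mul, zero_add] at hmn
      rcases mul_eq_zero.mp hmn with h0 | h0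
      · exact_mod_cast h0
      · exact absurd h0 ht'
    set D : AddSubgroup ℝ := AddSubgroup.closure {t, t'} with hD
    have hDdense : Dense (D : Set ℝ) := by
      rcases AddSubgroup.dense_or_cyclic D with hd | ⟨g, hg⟩
      · exact hd
      · exfalso
        have htD : t ∈ D := subset_closure (by simp)
        have ht'D : t' ∈ D := subset_closure (by simp)
        rw [hg, AddSubgroup.mem_closure_singleton] at htD ht'D
        obtain ⟨p, hp⟩ := htD
        obtain ⟨q, hq⟩ := ht'D
        have hqt : ((q:ℤ):ℝ) * t + ((-p : ℤ):ℝ) * t' = 0 := by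
          rw [← hp, ← hq]
          push_cast [zsmul_eq_mul]
          ring
        obtain ⟨h1, -⟩ := hind q (-p) hqt
        rw [h1, zero_zsmul] at hq
        exact ht' hq.symm
    set C : AddSubgroup (ℝ × AddCircle (2*π)) := S.topologicalClosure with hC
    have hCclosed : IsClosed (C : Set (ℝ × AddCircle (2*π))) := S.isClosed_topologicalClosure
    have hCcoe : (C : Set (ℝ × AddCircle (2*π))) = _root_.closure (S : Set (ℝ × AddCircle (2*π))) := rfl
    have hstar : ∀ x : ℝ, ∃ y : AddCircle (2*π), (x, y) ∈ C := by
      intro x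
      have hxD : x ∈ _root_.closure (D : Set ℝ) := by rw [hDdense.closure_eq]; trivial
      obtain ⟨dj, hdj_mem, hdj_lim⟩ := mem_closure_iff_seq_limit.mp hxD
      choose mm nn hmn using fun j => AddSubgroup.mem_closure_pair.mp (hdj_mem j)
      set q : ℕ → AddCircle (2*π) :=
        fun j => (((mm j : ℝ) * w + (nn j : ℝ) * w' : ℝ) : AddCircle (2*π)) with hqdef
      obtain ⟨y, -, φ, hφmono, hφlim⟩ := isCompact_univ.tendsto_subseq (fun j => Set.mem_univ (q j))
      refine ⟨y, ?_⟩
      have hmemS : ∀ j, ((dj (φ j), q (φ j)) : ℝ × AddCircle (2*π)) ∈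
          (S : Set (ℝ × AddCircle (2*π))) := by
        intro j
        rw [SetLike.mem_coe, AddSubgroup.mem_closure_pair]
        refine ⟨mm (φ j), nn (φ j), ?_⟩
        have hfst : (mm (φ j) • u + nn (φ j) • v).1 = dj (φ j) := by
          rw [← hmn (φ j)]
          simp [hu, hv, zsmul_eq_mul]
        have hsnd : (mm (φ j) • u + nn (φ j) • v).2 = q (φ j) := by
          show mm (φ j) • (w : AddCircle (2*π)) + nn (φ j) • (w' : AddCircle (2*π)) = _
          rw [hqdef]
          rw [← AddCircle.coe_zsmul, ← AddCircle.coe_zsmul, ← AddCircle.coe_add]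
          push_cast [zsmul_eq_mul]
          norm_num
        exact Prod.ext_iff.mpr ⟨hfst, hsnd⟩
      have hxlim : Tendsto (fun j => dj (φ j)) atTop (𝓝 x) := hdj_lim.comp hφmono.tendsto_atTop
      have hplim : Tendsto (fun j => ((dj (φ j), q (φ j)) : ℝ × AddCircle (2*π)))
          atTop (𝓝 (x, y)) := hxlim.prodMk_nhds hφlim
      show (x, y) ∈ _root_.closure (S : Set (ℝ × AddCircle (2*π)))
      exact mem_closure_of_tendsto hplim (Filter.Eventually.of_forall hmemS)
    set jhom : ℝ →+ ℝ × AddCircle (2*π) :=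
      AddMonoidHom.prod 0 (QuotientAddGroup.mk' (AddSubgroup.zmultiples (2*π))) with hjhom
    set W : AddSubgroup ℝ := AddSubgroup.comap jhom C with hW
    have hWmem : ∀ r : ℝ, r ∈ W ↔ ((0:ℝ), (r : AddCircle (2*π))) ∈ C := fun r => Iff.rfl
    have hWclosed : IsClosed (W : Set ℝ) := by
      have hcontj : Continuous (fun r : ℝ => ((0:ℝ), (r : AddCircle (2*π)))) :=
        continuous_const.prodMk (AddCircle.continuous_mk' (2*π))
      have : (W : Set ℝ) = (fun r : ℝ => ((0:ℝ), (r : AddCircle (2*π)))) ⁻¹'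
          (C : Set (ℝ × AddCircle (2*π))) := rfl
      rw [this]
      exact hCclosed.preimage hcontj
    have hWtop : (2*π) ∈ W := by
      rw [hWmem]
      have hcp : ((2*π : ℝ) : AddCircle (2*π)) = 0 := AddCircle.coe_period _
      rw [hcp]
      exact zero_mem C
    rcases AddSubgroup.dense_or_cyclic W with hWd | ⟨g, hWg⟩
    · -- vertical fiber dense: conclude density of S
      have hWuniv : ∀ r : ℝ, ((0:ℝ), (r : AddCircle (2*π))) ∈ C := by
        intro r
        rw [← hWmem]
        have hWu : (W : Set ℝ) = univ := by
          rw [← hWclosed.closure_eq, hWd.closure_eq]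
        rw [← SetLike.mem_coe, hWu]
        trivial
      rw [dense_iff_closure_eq, ← hCcoe]
      apply eq_univ_of_forall
      rintro ⟨x, yq⟩
      obtain ⟨y0, hy0⟩ := hstar x
      obtain ⟨r, hr⟩ := QuotientAddGroup.mk'_surjective (AddSubgroup.zmultiples (2*π)) (yq - y0)
      have hsum := C.add_mem hy0 (hWuniv r)
      have he : ((x, y0) : ℝ × AddCircle (2*π)) + ((0:ℝ), (r : AddCircle (2*π))) = (x, yq) := by
        have hr' : ((r : ℝ) : AddCircle (2*π)) = yq - y0 := hr
        rw [Prod.mk_add_mk, add_zero, hr', add_sub_cancel]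
      rw [he] at hsum
      exact hsum
    · -- vertical fiber cyclic: contradiction
      exfalso
      have h2πW := hWtop
      rw [hWg, AddSubgroup.mem_closure_singleton] at h2πW
      obtain ⟨l0, hl0⟩ := h2πW
      have hg0 : g ≠ 0 := by
        rintro rfl
        rw [smul_zero] at hl0
        linarith [pi_pos]
      set a : ℝ := |g| with ha
      have ha0 : 0 < a := abs_pos.mpr hg0
      have hWz : ∀ z ∈ W, z ∈ AddSubgroup.zmultiples a := by
        intro z hz
        rw [hWg, AddSubgroup.mem_closure_singleton] at hz
        obtain ⟨n, hn⟩ := hz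
        rw [AddSubgroup.mem_zmultiples_iff]
        rcases abs_choice g with hab | hab
        · exact ⟨n, by rw [ha, hab, hn]⟩
        · exact ⟨-n, by rw [ha, hab, ← hn]; simp⟩
      have h2πza := hWz _ hWtop
      rw [AddSubgroup.mem_zmultiples_iff] at h2πza
      obtain ⟨l, hl⟩ := h2πza
      have hlne : l ≠ 0 := by
        rintro rfl
        rw [zero_zsmul] at hl
        linarith [pi_pos]
      have hle : AddSubgroup.zmultiples (2*π) ≤ AddSubgroup.zmultiples a :=
        AddSubgroup.zmultiples_le.mpr (by rw [AddSubgroup.mem_zmultiples_iff]; exact ⟨l, hl⟩)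
      set ρ : AddCircle (2*π) →+ AddCircle a :=
        QuotientAddGroup.map _ _ (AddMonoidHom.id ℝ) hle with hρ
      have hρcoe : ∀ r : ℝ, ρ ((r : ℝ) : AddCircle (2*π)) = (r : AddCircle a) := fun r => rfl
      have hρcont : Continuous ρ := continuous_coinduced_dom.mpr (AddCircle.continuous_mk' a)
      have hker : ∀ q0 : AddCircle (2*π), ((0:ℝ), q0) ∈ C → ρ q0 = 0 := by
        intro q0 hq0
        obtain ⟨r, rfl⟩ := QuotientAddGroup.mk'_surjective (AddSubgroup.zmultiples (2*π)) q0
        have hrW : r ∈ W := (hWmem r).mpr hq0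
        have hrz := hWz r hrW
        rw [AddSubgroup.mem_zmultiples_iff] at hrz
        obtain ⟨n, hn⟩ := hrz
        have hz : ((r : ℝ) : AddCircle a) = 0 := by
          rw [AddCircle.coe_eq_zero_iff]
          exact ⟨n, hn⟩
        exact hz
      have hkey : ∀ x : ℝ, ∀ q1 q2 : AddCircle (2*π), (x, q1) ∈ C → (x, q2) ∈ C →
          ρ q1 = ρ q2 := by
        intro x q1 q2 h1 h2
        have hdiff : ((0:ℝ), q1 - q2) ∈ C := by
          have hsub := C.sub_mem h1 h2
          have hd : ((x, q1) : ℝ × AddCircle (2*π)) - (x, q2) = ((0:ℝ), q1 - q2) := by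
            rw [Prod.mk_sub_mk, sub_self]
          rwa [hd] at hsub
        have h0 := hker _ hdiff
        rw [map_sub] at h0
        exact sub_eq_zero.mp h0
      choose Y hY using hstar
      have hΦadd : ∀ x y : ℝ, ρ (Y (x+y)) = ρ (Y x) + ρ (Y y) := by
        intro x y
        have hxy : ((x + y : ℝ), Y x + Y y) ∈ C := by
          have hadd2 := C.add_mem (hY x) (hY y)
          have he : ((x, Y x) : ℝ × AddCircle (2*π)) + (y, Y y) = (x + y, Y x + Y y) := rfl
          rwa [he] at hadd2
        rw [hkey (x+y) (Y (x+y)) (Y x + Y y) (hY (x+y)) hxy, map_add]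
      set Φ : ℝ →+ AddCircle a := AddMonoidHom.mk' (fun x => ρ (Y x)) hΦadd with hΦ
      have hΦcont : Continuous Φ := by
        rw [continuous_iff_seqContinuous]
        intro xs x hxs
        apply Filter.tendsto_of_subseq_tendsto
        intro ns hns
        obtain ⟨y, -, φ, hφmono, hφlim⟩ :=
          isCompact_univ.tendsto_subseq (fun j => Set.mem_univ (Y (xs (ns j))))
        refine ⟨φ, ?_⟩
        have hxlim : Tendsto (fun j => xs (ns (φ j))) atTop (𝓝 x) :=
          hxs.comp (hns.comp hφmono.tendsto_atTop)
        have hplim : Tendsto (fun j => ((xs (ns (φ j)), Y (xs (ns (φ j)))) : ℝ × AddCircle (2*π)))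
            atTop (𝓝 (x, y)) := hxlim.prodMk_nhds hφlim
        have hxyC : (x, y) ∈ C := by
          have hm : (x, y) ∈ _root_.closure (C : Set (ℝ × AddCircle (2*π))) :=
            mem_closure_of_tendsto hplim (Filter.Eventually.of_forall fun j => hY (xs (ns (φ j))))
          rwa [hCclosed.closure_eq] at hm
        have hlim2 : Tendsto (fun j => ρ (Y (xs (ns (φ j))))) atTop (𝓝 (ρ y)) :=
          (hρcont.tendsto y).comp hφlim
        have hρy : ρ y = Φ x := hkey x y (Y x) hxyC (hY x)
        rw [hρy] at hlim2
        exact hlim2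
      obtain ⟨c, hcΦ⟩ := hom_linear ha0 Φ hΦcont
      have hwt : ∃ k1 : ℤ, k1 • a = c * t - w := by
        have huC : ((t, (w : AddCircle (2*π))) : ℝ × AddCircle (2*π)) ∈ C :=
          S.le_topologicalClosure (subset_closure (by simp [hu]))
        have h1 : Φ t = ρ ((w : ℝ) : AddCircle (2*π)) := hkey t (Y t) _ (hY t) huC
        rw [hcΦ t, hρcoe] at h1
        rw [QuotientAddGroup.eq_iff_sub_mem] at h1
        rw [AddSubgroup.mem_zmultiples_iff] at h1
        exact h1
      have hwt' : ∃ k2 : ℤ, k2 • a = c * t' - w' := by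
        have hvC : ((t', (w' : AddCircle (2*π))) : ℝ × AddCircle (2*π)) ∈ C :=
          S.le_topologicalClosure (subset_closure (by simp [hv]))
        have h1 : Φ t' = ρ ((w' : ℝ) : AddCircle (2*π)) := hkey t' (Y t') _ (hY t') hvC
        rw [hcΦ t', hρcoe] at h1
        rw [QuotientAddGroup.eq_iff_sub_mem] at h1
        rw [AddSubgroup.mem_zmultiples_iff] at h1
        exact h1
      obtain ⟨k1, hk1⟩ := hwt
      obtain ⟨k2, hk2⟩ := hwt'
      have e1 : w = c*t - (k1:ℝ)*a := by
        rw [zsmul_eq_mul] at hk1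
        linarith
      have e2 : w' = c*t' - (k2:ℝ)*a := by
        rw [zsmul_eq_mul] at hk2
        linarith
      have e3 : (2*π : ℝ) = (l:ℝ)*a := by
        rw [zsmul_eq_mul] at hl
        linarith
      have hfin : ((-k2 : ℤ):ℝ) * (t/t') + ((l:ℤ):ℝ) * ((w - w'*(t/t'))/(2*π)) = ((-k1:ℤ):ℝ) := by
        have h2πne : (2*π:ℝ) ≠ 0 := ne_of_gt hπ
        have ha' : a ≠ 0 := ne_of_gt ha0
        have hlr : ((l:ℤ):ℝ) ≠ 0 := Int.cast_ne_zero.mpr hlne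
        set X : ℝ := t/t' with hX
        have hXt' : X * t' = t := div_mul_cancel₀ t ht'
        have h4 : w - w'*X = -(k1:ℝ)*a + (k2:ℝ)*a*X := by
          rw [e1, e2]
          linear_combination (-c) * hXt'
        push_cast
        rw [h4, e3]
        rw [show (-(k1:ℝ)*a + (k2:ℝ)*a*X)/((l:ℝ)*a) = (-(k1:ℝ) + (k2:ℝ)*X)/(l:ℝ) from by
          rw [div_eq_div_iff (mul_ne_zero hlr ha') hlr]; ring]
        rw [mul_div_cancel₀ _ hlr]
        ring
      obtain ⟨hb1, hb2⟩ := hrel (-k2) l (-k1) hfin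
      exact hlne hb2
end

section
/- Kronecker's theorem: a vector (w₁, …, w_k) ∈ 𝕋^k = (ℝ/ℤ)^k generates a dense subgroup of 𝕋^k (under integer multiples) if and only if there is no (a₁, …, a_k) ∈ ℤ^k \ {0} with a₁w₁ + … + a_k w_k = 0 in ℝ/ℤ. -/
open MeasureTheory AddCircle Set Function Filter Topology Submodule

namespace Kron3

/-- The character of `𝕋^k` attached to an integer vector `a`. -/
noncomputable def χ {k : ℕ} (a : Fin k → ℤ) : C(Fin k → AddCircle (1:ℝ), ℂ) :=
  ∏ i, (fourier (a i)).comp ⟨fun q => q i, continuous_apply i⟩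

lemma χ_apply {k : ℕ} (a : Fin k → ℤ) (p : Fin k → AddCircle (1:ℝ)) :
    χ a p = ∏ i, fourier (a i) (p i) := by
  simp [χ]

lemma χ_zero {k : ℕ} : χ (0 : Fin k → ℤ) = 1 := by
  ext p; simp [χ_apply, fourier_zero]

lemma χ_mul {k : ℕ} (a b : Fin k → ℤ) : χ a * χ b = χ (a + b) := by
  ext p
  simp only [ContinuousMap.mul_apply, χ_apply, ← Finset.prod_mul_distrib]
  refine Finset.prod_congr rfl fun i _ => ?_
  rw [Pi.add_apply, fourier_add]

lemma χ_star {k : ℕ} (a : Fin k → ℤ) : star (χ a) = χ (-a) := by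
  ext p
  simp only [ContinuousMap.star_apply, χ_apply, starRingEnd_apply, star_prod]
  refine Finset.prod_congr rfl fun i _ => ?_
  rw [Pi.neg_apply, fourier_neg]
  rfl

lemma χ_eq_toCircle {k : ℕ} (a : Fin k → ℤ) (p : Fin k → AddCircle (1:ℝ)) :
    χ a p = (toCircle (∑ i, a i • p i) : ℂ) := by
  rw [χ_apply]
  induction (Finset.univ : Finset (Fin k)) using Finset.induction with
  | empty => simp
  | insert _ _ h ih =>
    rw [Finset.prod_insert h, Finset.sum_insert h, toCircle_add, Circle.coe_mul, ih, fourier_apply]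

lemma χ_add {k : ℕ} (a : Fin k → ℤ) (x y : Fin k → AddCircle (1:ℝ)) :
    χ a (x + y) = χ a x * χ a y := by
  simp only [χ_eq_toCircle, ← Circle.coe_mul, ← toCircle_add]
  congr 1
  rw [← Finset.sum_add_distrib]
  congr 1
  exact Finset.sum_congr rfl fun i _ => by rw [Pi.add_apply, smul_add]

lemma χ_nsmul {k : ℕ} (a : Fin k → ℤ) (x : Fin k → AddCircle (1:ℝ)) (n : ℕ) :
    χ a (n • x) = (χ a x) ^ n := by
  induction n with
  | zero => simp [χ_eq_toCircle]
  | succ n ih => rw [succ_nsmul, χ_add, ih, pow_succ]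

/-- The star subalgebra generated by the characters. -/
noncomputable def χAlg (k : ℕ) : StarSubalgebra ℂ C(Fin k → AddCircle (1:ℝ), ℂ) where
  toSubalgebra := Algebra.adjoin ℂ (range (χ (k := k)))
  star_mem' := by
    show Algebra.adjoin ℂ (range (χ (k := k))) ≤
        star (Algebra.adjoin ℂ (range (χ (k := k))))
    refine Algebra.adjoin_le ?_
    rintro - ⟨a, rfl⟩
    exact Algebra.subset_adjoin ⟨-a, (χ_star a).symm⟩

theorem χAlg_coe (k : ℕ) :
    Subalgebra.toSubmodule (χAlg k).toSubalgebra = span ℂ (range (χ (k := k))) := by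
  apply Algebra.adjoin_eq_span_of_subset
  refine Subset.trans ?_ Submodule.subset_span
  intro x hx
  refine Submonoid.closure_induction (fun _ => id) ⟨0, χ_zero⟩ ?_ hx
  rintro - - - - ⟨a, rfl⟩ ⟨b, rfl⟩
  exact ⟨a + b, (χ_mul a b).symm⟩

theorem χAlg_separates (k : ℕ) : (χAlg k).SeparatesPoints := by
  haveI : Fact ((0:ℝ) < 1) := ⟨one_pos⟩
  intro p q hpq
  obtain ⟨j, hj⟩ := Function.ne_iff.mp hpq
  refine ⟨_, ⟨χ (Pi.single j 1), Algebra.subset_adjoin ⟨_, rfl⟩, rfl⟩, ?_⟩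
  dsimp only
  have key : ∀ r : Fin k → AddCircle (1:ℝ), χ (Pi.single j (1:ℤ)) r = (toCircle (r j) : ℂ) := by
    intro r
    rw [χ_eq_toCircle]
    congr 1
    rw [Finset.sum_eq_single j]
    · simp
      rfl
    · intro i _ hij; simp [Pi.single_eq_of_ne hij]
    · simp
  rw [key, key]
  intro h
  have h2 : toCircle (p j) = toCircle (q j) := Subtype.coe_injective h
  exact hj (injective_toCircle one_ne_zero h2)

theorem span_χ_dense (k : ℕ) :
    (span ℂ (range (χ (k := k)))).topologicalClosure = ⊤ := by
  rw [← χAlg_coe]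
  have := ContinuousMap.starSubalgebra_topologicalClosure_eq_top_of_separatesPoints (χAlg k)
    (χAlg_separates k)
  exact congr_arg (Subalgebra.toSubmodule <| StarSubalgebra.toSubalgebra ·) this

lemma volume_eq_haar : (volume : Measure (AddCircle (1:ℝ))) = haarAddCircle := by
  haveI : Fact ((0:ℝ) < 1) := ⟨one_pos⟩
  rw [volume_eq_smul_haarAddCircle]; simp

lemma prob_pi (k : ℕ) : IsProbabilityMeasure (volume : Measure (Fin k → AddCircle (1:ℝ))) := by
  haveI : Fact ((0:ℝ) < 1) := ⟨one_pos⟩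
  haveI : IsProbabilityMeasure (volume : Measure (AddCircle (1:ℝ))) := by
    rw [volume_eq_haar]; infer_instance
  rw [volume_pi]; infer_instance

lemma openpos_pi (k : ℕ) :
    (volume : Measure (Fin k → AddCircle (1:ℝ))).IsOpenPosMeasure := by
  haveI : Fact ((0:ℝ) < 1) := ⟨one_pos⟩
  haveI : (volume : Measure (AddCircle (1:ℝ))).IsOpenPosMeasure := by
    rw [volume_eq_haar]; infer_instance
  rw [volume_pi]; infer_instance

lemma integral_χ_ne {k : ℕ} {a : Fin k → ℤ} (ha : a ≠ 0) :
    ∫ p : Fin k → AddCircle (1:ℝ), χ a p = 0 := by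
  haveI : Fact ((0:ℝ) < 1) := ⟨one_pos⟩
  have : ∫ p : Fin k → AddCircle (1:ℝ), χ a p
      = ∫ p : Fin k → AddCircle (1:ℝ), ∏ i, fourier (a i) (p i) := by
    simp_rw [χ_apply]
  rw [this, integral_fintype_prod_volume_eq_prod (fun i x => fourier (a i) x)]
  obtain ⟨j, hj⟩ := Function.ne_iff.mp ha
  refine Finset.prod_eq_zero (Finset.mem_univ j) ?_
  rw [volume_eq_haar]
  exact integral_eq_zero_of_add_right_eq_neg (μ := haarAddCircle)
    (fourier_add_half_inv_index hj one_pos)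

lemma tendsto_cesaro {z : ℂ} (hz : ‖z‖ = 1) (h1 : z ≠ 1) :
    Tendsto (fun N : ℕ => (N:ℂ)⁻¹ * ∑ n ∈ Finset.range N, z ^ n) atTop (𝓝 0) := by
  apply squeeze_zero_norm (a := fun N : ℕ => (2 / ‖z - 1‖) / (N:ℝ))
  · intro N
    rcases Nat.eq_zero_or_pos N with h | h
    · simp [h]
    have h2 : ‖z ^ N - 1‖ ≤ 2 := by
      calc ‖z ^ N - 1‖ ≤ ‖z ^ N‖ + ‖(1:ℂ)‖ := norm_sub_le _ _
        _ = 2 := by rw [norm_pow, hz]; norm_num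
    have hz1 : (0:ℝ) < ‖z - 1‖ := by rwa [norm_pos_iff, sub_ne_zero]
    have hre : (2 / ‖z - 1‖) / (N:ℝ) = (N:ℝ)⁻¹ * (2 / ‖z - 1‖) := by ring
    rw [geom_sum_eq h1, norm_mul, norm_inv, Complex.norm_natCast, norm_div, hre]
    gcongr
  · exact tendsto_const_div_atTop_nhds_zero_nat _

/-- Ergodic averages along the forward orbit of `w`. -/
noncomputable def L {k : ℕ} (w : Fin k → AddCircle (1:ℝ)) (N : ℕ)
    (h : C(Fin k → AddCircle (1:ℝ), ℂ)) : ℂ :=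
  (N:ℂ)⁻¹ * ∑ n ∈ Finset.range N, h (n • w)

lemma L_sub {k : ℕ} (w : Fin k → AddCircle (1:ℝ)) (N : ℕ)
    (g h : C(Fin k → AddCircle (1:ℝ), ℂ)) : L w N (g - h) = L w N g - L w N h := by
  simp only [L, ContinuousMap.sub_apply, Finset.sum_sub_distrib, mul_sub]

lemma L_norm_le {k : ℕ} (w : Fin k → AddCircle (1:ℝ)) {N : ℕ} (hN : 1 ≤ N)
    (h : C(Fin k → AddCircle (1:ℝ), ℂ)) : ‖L w N h‖ ≤ ‖h‖ := by
  rw [L, norm_mul, norm_inv, Complex.norm_natCast]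
  calc ((N:ℝ))⁻¹ * ‖∑ n ∈ Finset.range N, h (n • w)‖
      ≤ ((N:ℝ))⁻¹ * ∑ n ∈ Finset.range N, ‖h (n • w)‖ := by
        gcongr; exact norm_sum_le _ _
    _ ≤ ((N:ℝ))⁻¹ * ∑ n ∈ Finset.range N, ‖h‖ := by
        gcongr with n hn
        exact h.norm_coe_le_norm _
    _ = ((N:ℝ))⁻¹ * (N * ‖h‖) := by rw [Finset.sum_const, Finset.card_range, nsmul_eq_mul]
    _ ≤ ‖h‖ := by
        have : (N:ℝ) ≠ 0 := Nat.cast_ne_zero.mpr (by omega)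
        rw [← mul_assoc, inv_mul_cancel₀ this, one_mul]

lemma tendsto_L_of_mem_span {k : ℕ} (w : Fin k → AddCircle (1:ℝ))
    (hno : ¬ ∃ a : Fin k → ℤ, a ≠ 0 ∧ ∑ i, a i • w i = 0)
    {P : C(Fin k → AddCircle (1:ℝ), ℂ)} (hP : P ∈ span ℂ (range (χ (k := k)))) :
    Tendsto (fun N => L w N P) atTop (𝓝 (∫ p, P p)) := by
  haveI : Fact ((0:ℝ) < 1) := ⟨one_pos⟩
  haveI := prob_pi k
  induction hP using span_induction with
  | mem P hP =>
    obtain ⟨a, rfl⟩ := hP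
    rcases eq_or_ne a 0 with rfl | ha
    · rw [χ_zero]
      have : ∫ p : Fin k → AddCircle (1:ℝ), (1 : C(Fin k → AddCircle (1:ℝ), ℂ)) p = 1 := by
        simp
      rw [this]
      apply Tendsto.congr' ?_ tendsto_const_nhds
      filter_upwards [eventually_ge_atTop 1] with N hN
      have hN0 : (N:ℂ) ≠ 0 := Nat.cast_ne_zero.mpr (by omega)
      simp [L, Finset.sum_const, Finset.card_range, inv_mul_cancel₀ hN0]
    · rw [integral_χ_ne ha]
      have hzval : ∀ n : ℕ, χ a (n • w) = (χ a w) ^ n := fun n => χ_nsmul a w n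
      have hz : ‖χ a w‖ = 1 := by
        rw [χ_eq_toCircle]
        exact Circle.norm_coe _
      have h1 : χ a w ≠ 1 := by
        intro h
        rw [χ_eq_toCircle] at h
        have h2 : toCircle (∑ i, a i • w i) = toCircle (0 : AddCircle (1:ℝ)) := by
          apply Subtype.coe_injective
          show ((∑ i, a i • w i).toCircle : ℂ) = ((toCircle (0 : AddCircle (1:ℝ)) : Circle) : ℂ)
          rw [h, toCircle_zero]
          simp
        exact hno ⟨a, ha, injective_toCircle one_ne_zero h2⟩
      simp only [L, hzval]
      exact tendsto_cesaro hz h1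
  | zero =>
    have h0 : ∀ N : ℕ, L w N (0 : C(Fin k → AddCircle (1:ℝ), ℂ)) = 0 := by
      intro N; simp [L]
    simp only [h0, ContinuousMap.zero_apply, integral_zero]
    exact tendsto_const_nhds
  | add x y hx hy ihx ihy =>
    have hint : ∀ u : C(Fin k → AddCircle (1:ℝ), ℂ), Integrable u volume := fun u =>
      u.continuous.integrable_of_hasCompactSupport (HasCompactSupport.of_compactSpace _)
    have : ∫ p, (x + y) p = (∫ p, x p) + ∫ p, y p := by
      simp only [ContinuousMap.add_apply]
      exact integral_add (hint x) (hint y)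
    rw [this]
    have : ∀ N, L w N (x + y) = L w N x + L w N y := by
      intro N
      simp only [L, ContinuousMap.add_apply, Finset.sum_add_distrib, mul_add]
    simpa [this] using ihx.add ihy
  | smul c x hx ihx =>
    have : ∫ p, (c • x) p = c • ∫ p, x p := by
      simp only [ContinuousMap.smul_apply]
      exact integral_smul c _
    rw [this]
    have hL : ∀ N, L w N (c • x) = c * L w N x := by
      intro N
      simp only [L, ContinuousMap.smul_apply, smul_eq_mul, ← Finset.mul_sum]
      ring
    simp only [hL, smul_eq_mul]
    exact ihx.const_mul c

end Kron3

open Kron3 in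
/-- Kronecker's theorem: `(w₁, …, w_k) ∈ 𝕋^k = (ℝ/ℤ)^k` generates a dense subgroup iff
there is no nonzero integer vector `a` with `∑ aᵢ wᵢ = 0` in `ℝ/ℤ`. -/
theorem stmt_3 (k : ℕ) (w : Fin k → AddCircle (1 : ℝ)) :
    Dense {p : Fin k → AddCircle (1 : ℝ) | ∃ n : ℤ, p = n • w} ↔
      ¬ ∃ a : Fin k → ℤ, a ≠ 0 ∧ ∑ i, a i • w i = 0 := by
  haveI : Fact ((0:ℝ) < 1) := ⟨one_pos⟩
  haveI := prob_pi k
  haveI := openpos_pi k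
  constructor
  · rintro hd ⟨a, ha0, hrel⟩
    -- the relation gives a continuous homomorphism vanishing on a dense set
    set ψ : (Fin k → AddCircle (1:ℝ)) → AddCircle (1:ℝ) := fun p => ∑ i, a i • p i with hψ
    have hψc : Continuous ψ := by
      apply continuous_finset_sum
      intro i _
      exact (continuous_zsmul (a i)).comp (continuous_apply i)
    have hψS : EqOn ψ (fun _ => (0 : AddCircle (1:ℝ)))
        {p : Fin k → AddCircle (1 : ℝ) | ∃ n : ℤ, p = n • w} := by
      rintro p ⟨n, rfl⟩
      show ∑ i, a i • (n • w) i = 0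
      have : ∀ i, a i • (n • w) i = n • (a i • w i) := by
        intro i
        rw [Pi.smul_apply, smul_comm]
      simp_rw [this, ← Finset.smul_sum, hrel, smul_zero]
    have hall : ψ = fun _ => 0 := Continuous.ext_on hd hψc continuous_const hψS
    obtain ⟨j, hj⟩ := Function.ne_iff.mp ha0
    have haj : ((a j : ℝ)) ≠ 0 := Int.cast_ne_zero.mpr hj
    set x : AddCircle (1:ℝ) := ((1 / (2 * (a j : ℝ)) : ℝ) : AddCircle (1:ℝ)) with hx
    have hev : ψ (Pi.single j x) = a j • x := by
      show ∑ i, a i • (Pi.single j x : Fin k → AddCircle (1:ℝ)) i = a j • x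
      rw [Finset.sum_eq_single j]
      · rw [Pi.single_eq_same]
      · intro i _ hij
        rw [Pi.single_eq_of_ne hij, smul_zero]
      · intro h; exact absurd (Finset.mem_univ j) h
    have hval : a j • x = ((1/2 : ℝ) : AddCircle (1:ℝ)) := by
      rw [hx, ← QuotientAddGroup.mk_zsmul]
      congr 1
      rw [zsmul_eq_mul]
      field_simp
    have : ((1/2 : ℝ) : AddCircle (1:ℝ)) = 0 := by
      rw [← hval, ← hev, hall]
    rw [AddCircle.coe_eq_zero_iff] at this
    obtain ⟨n, hn⟩ := this
    rw [zsmul_eq_mul, mul_one] at hn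
    have h2 : ((2 * n : ℤ) : ℝ) = 1 := by push_cast; linarith
    have : (2 * n : ℤ) = 1 := by exact_mod_cast h2
    omega
  · intro hno
    by_contra hnd
    -- find a point away from the closure of the orbit
    rw [dense_iff_closure_eq, ← ne_eq, ← Set.ssubset_univ_iff] at hnd
    obtain ⟨x₀, -, hx₀⟩ := exists_of_ssubset hnd
    set S := {p : Fin k → AddCircle (1 : ℝ) | ∃ n : ℤ, p = n • w} with hS
    -- Urysohn function
    obtain ⟨f, hf0, hf1, hficc⟩ := exists_continuous_zero_one_of_isCompact
      (isClosed_closure.isCompact : IsCompact (closure S)) (isClosed_singleton (x := x₀))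
      (by rwa [Set.disjoint_singleton_right])
    -- complex version
    set g : C(Fin k → AddCircle (1:ℝ), ℂ) :=
      ⟨fun x => ((f x : ℝ) : ℂ), Complex.continuous_ofReal.comp f.continuous⟩ with hg
    have hint : ∀ u : C(Fin k → AddCircle (1:ℝ), ℂ), Integrable u volume := fun u =>
      u.continuous.integrable_of_hasCompactSupport (HasCompactSupport.of_compactSpace _)
    have hfint : Integrable (fun x => f x) volume :=
      f.continuous.integrable_of_hasCompactSupport (HasCompactSupport.of_compactSpace _)
    -- positive integral
    have hIf : 0 < ∫ x, f x := by
      rw [integral_pos_iff_support_of_nonneg (fun x => (hficc x).1) hfint]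
      have hopen : IsOpen (support fun x => f x) := by
        have : (support fun x => f x) = (fun x => f x) ⁻¹' ({0}ᶜ) := by
          ext y; simp [Function.mem_support]
        rw [this]
        exact f.continuous.isOpen_preimage _ (isOpen_compl_singleton)
      apply hopen.measure_pos volume
      exact ⟨x₀, by simp [Function.mem_support, hf1 rfl]⟩
    set ε : ℝ := (∫ x, f x) / 3 with hε
    have hεpos : 0 < ε := by positivity
    -- approximate g by a trigonometric polynomial
    have hgmem : g ∈ closure ((span ℂ (range (χ (k := k))) : Submodule ℂ _) : Set _) := by
      have h := span_χ_dense k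
      have : g ∈ (span ℂ (range (χ (k := k)))).topologicalClosure := by
        rw [h]; trivial
      rwa [← Submodule.topologicalClosure_coe]
    rw [Metric.mem_closure_iff] at hgmem
    obtain ⟨P, hPmem, hPdist⟩ := hgmem ε hεpos
    have hPnorm : ‖g - P‖ < ε := by rwa [← dist_eq_norm]
    -- averages of g vanish
    have hLg : ∀ N, L w N g = 0 := by
      intro N
      rw [L]
      have : ∀ n ∈ Finset.range N, g (n • w) = 0 := by
        intro n _
        have hmem : (n • w) ∈ S := ⟨(n : ℤ), by rw [natCast_zsmul]⟩
        have : f (n • w) = 0 := hf0 (subset_closure hmem)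
        simp [hg, this]
      rw [Finset.sum_congr rfl this]
      simp
    -- limit of averages of P
    have htend := tendsto_L_of_mem_span w hno hPmem
    -- ‖∫ P‖ ≤ ε
    have hIP : ‖∫ p, P p‖ ≤ ε := by
      apply le_of_tendsto htend.norm
      filter_upwards [eventually_ge_atTop 1] with N hN
      have : L w N P = - (L w N (g - P)) := by rw [L_sub, hLg]; ring
      rw [this, norm_neg]
      exact (L_norm_le w hN _).trans hPnorm.le
    -- ∫ g = ∫ f is 3ε
    have hIg : ∫ p, g p = ((∫ x, f x : ℝ) : ℂ) := by
      rw [hg]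
      exact integral_ofReal
    have hIgP : ‖(∫ p, g p) - ∫ p, P p‖ ≤ ε := by
      rw [← integral_sub (hint g) (hint P)]
      have : ∀ p, ‖g p - P p‖ ≤ ε := by
        intro p
        calc ‖g p - P p‖ = ‖(g - P) p‖ := by rw [ContinuousMap.sub_apply]
          _ ≤ ‖g - P‖ := (g - P).norm_coe_le_norm p
          _ ≤ ε := hPnorm.le
      calc ‖∫ p, (g p - P p)‖ ≤ ε * (volume Set.univ).toReal :=
            norm_integral_le_of_norm_le_const (Eventually.of_forall this)
        _ = ε := by simp
    have hfinal : ‖∫ p, g p‖ ≤ 2 * ε := by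
      calc ‖∫ p, g p‖ ≤ ‖(∫ p, g p) - ∫ p, P p‖ + ‖∫ p, P p‖ := by
            simpa using norm_add_le ((∫ p, g p) - ∫ p, P p) (∫ p, P p)
        _ ≤ ε + ε := add_le_add hIgP hIP
        _ = 2 * ε := by ring
    rw [hIg, Complex.norm_real, Real.norm_eq_abs, abs_of_pos hIf] at hfinal
    rw [hε] at hfinal
    linarith
end

section
/- Let E be dense in ℝ × 𝕋 where E = { m(t,v) + n(t',v') : m,n ∈ ℤ }, t, t' ∈ ℝ \ {0}, and suppose t/t' > 0. Then the subset { m(t,v) − n(t',v') : m, n ∈ ℤ, m > 0, n > 0 } is also dense in ℝ × 𝕋. -/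
open Real

/-- If the subgroup generated by `(t,v)` and `(t',v')` is dense in ℝ × (ℝ/2πℤ) and
`t/t' > 0`, then the positive combinations `m(t,v) − n(t',v')`, `m,n > 0`, are dense. -/
theorem stmt_5 (t t' : ℝ) (v v' : AddCircle (2 * π)) (ht : t ≠ 0) (ht' : t' ≠ 0)
    (hpos : 0 < t / t')
    (hdense : Dense {p : ℝ × AddCircle (2 * π) |
      ∃ m n : ℤ, p = m • ((t, v) : ℝ × AddCircle (2 * π)) + n • ((t', v') : ℝ × AddCircle (2 * π))}) :
    Dense {p : ℝ × AddCircle (2 * π) |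
      ∃ m n : ℤ, 0 < m ∧ 0 < n ∧
        p = m • ((t, v) : ℝ × AddCircle (2 * π)) - n • ((t', v') : ℝ × AddCircle (2 * π))} := by
  set a : ℝ × AddCircle (2 * π) := (t, v) with ha
  set b : ℝ × AddCircle (2 * π) := (t', v') with hb
  have htt' : 0 < t * t' := by
    rcases div_pos_iff.mp hpos with ⟨h1, h2⟩ | ⟨h1, h2⟩
    · exact mul_pos h1 h2
    · exact mul_pos_of_neg_of_neg h1 h2
  have ht'0 : (0:ℝ) < |t'| := abs_pos.mpr ht'
  have ht'2 : (0:ℝ) < t' ^ 2 := by positivity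
  have hfst : ∀ m n : ℤ, ((m • a + n • b).1) = m * t + n * t' := by
    intro m n
    rw [Prod.fst_add, Prod.smul_fst, Prod.smul_fst, ha, hb, zsmul_eq_mul, zsmul_eq_mul]
  -- the "sign" lemma: a small combination with large positive m forces very negative n
  have sign : ∀ (ε : ℝ) (B m n : ℤ), |(m:ℝ) * t + n * t'| < ε →
      (ε * |t'| + B * t' ^ 2) / (t * t') < (m : ℝ) → n < -B := by
    intro ε B m n hs hm
    have hm' : (ε * |t'| + (B:ℝ) * t' ^ 2) < m * (t * t') := by
      rw [div_lt_iff₀ htt'] at hm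
      linarith
    have h1 : t' * ((m:ℝ) * t + n * t') < |t'| * ε := by
      calc t' * ((m:ℝ) * t + n * t') ≤ |t' * ((m:ℝ) * t + n * t')| := le_abs_self _
        _ = |t'| * |(m:ℝ) * t + n * t'| := abs_mul _ _
        _ < |t'| * ε := by exact mul_lt_mul_of_pos_left hs ht'0
    have h2 : (n:ℝ) * t' ^ 2 < (-B:ℝ) * t' ^ 2 := by nlinarith
    have h3 : (n:ℝ) < -B := (mul_lt_mul_iff_of_pos_right ht'2).mp h2
    exact_mod_cast h3
  -- small elements with large positive coefficients
  have key : ∀ ε : ℝ, 0 < ε → ∀ B : ℤ, ∃ p q : ℤ, B < p ∧ B < q ∧ ‖p • a - q • b‖ < ε := by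
    intro ε hε B
    set r : ℕ → ℝ := fun k => (ε / 3) * (1 / 3) ^ k with hrdef
    have hrpos : ∀ k, 0 < r k := by intro k; positivity
    have hrsucc : ∀ k, r (k + 1) = r k / 3 := by
      intro k; simp only [hrdef, pow_succ]; ring
    have hrle : ∀ k, r k ≤ ε / 3 := by
      intro k
      have h1 : ((1:ℝ)/3) ^ k ≤ 1 := pow_le_one₀ (by norm_num) (by norm_num)
      have := mul_le_mul_of_nonneg_left h1 (le_of_lt (by positivity : (0:ℝ) < ε/3))
      simpa [hrdef] using this
    have H : ∀ k : ℕ, ∃ m n : ℤ,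
        ‖(m • a + n • b) - ((r k, 0) : ℝ × AddCircle (2 * π))‖ < r k / 2 := by
      intro k
      obtain ⟨w, hw, hwE⟩ := Metric.dense_iff.mp hdense ((r k, 0)) (r k / 2)
        (by have := hrpos k; positivity)
      obtain ⟨m, n, rfl⟩ := hwE
      exact ⟨m, n, by rwa [Metric.mem_ball, dist_eq_norm] at hw⟩
    choose m n hmn using H
    set z : ℕ → ℝ × AddCircle (2 * π) := fun k => m k • a + n k • b with hzdef
    have hfb : ∀ k, |(z k).1 - r k| < r k / 2 := by
      intro k
      have h1 : ‖(z k - ((r k, 0) : ℝ × AddCircle (2 * π))).1‖ ≤ ‖z k - ((r k, 0) : ℝ × AddCircle (2 * π))‖ :=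
        norm_fst_le _
      have h2 : (z k - ((r k, 0) : ℝ × AddCircle (2 * π))).1 = (z k).1 - r k := rfl
      rw [h2, Real.norm_eq_abs] at h1
      exact lt_of_le_of_lt h1 (hmn k)
    have hanti : StrictAnti (fun k => (z k).1) := by
      apply strictAnti_nat_of_succ_lt
      intro k
      have h1 := abs_lt.mp (hfb k)
      have h2 := abs_lt.mp (hfb (k + 1))
      have h3 := hrsucc k
      have h4 := hrpos k
      linarith [h1.1, h2.2]
    have hnorm : ∀ k, ‖z k‖ < ε := by
      intro k
      have h1 := norm_add_le (z k - ((r k, 0) : ℝ × AddCircle (2 * π)))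
        (((r k, 0) : ℝ × AddCircle (2 * π)))
      rw [sub_add_cancel] at h1
      have h2 : ‖((r k, 0) : ℝ × AddCircle (2 * π))‖ = r k := by
        rw [Prod.norm_def]
        simp [Real.norm_eq_abs, abs_of_pos (hrpos k)]
        exact (hrpos k).le
      have := hrle k
      have := hrpos k
      have := hmn k
      linarith
    have habs1 : ∀ k, |(m k : ℝ) * t + (n k : ℝ) * t'| < ε := by
      intro k
      have h1 : ‖(z k).1‖ ≤ ‖z k‖ := norm_fst_le _
      have h2 : (z k).1 = (m k : ℝ) * t + (n k : ℝ) * t' := hfst (m k) (n k)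
      rw [h2, Real.norm_eq_abs] at h1
      exact lt_of_le_of_lt h1 (hnorm k)
    -- the coefficients m k are unbounded
    set C : ℝ := (ε * |t'| + B * t' ^ 2) / (t * t') with hC
    set M : ℤ := max (B + 1) (⌈C⌉ + 1) with hM
    have hMB : B < M := lt_of_lt_of_le (lt_add_one B) (le_max_left _ _)
    have hMC : C < (M : ℝ) := by
      have h1 : (⌈C⌉ : ℝ) + 1 ≤ (M : ℝ) := by exact_mod_cast le_max_right (B+1) (⌈C⌉+1)
      have h2 : C ≤ (⌈C⌉ : ℝ) := Int.le_ceil C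
      linarith
    have hex : ∃ k, M < |m k| := by
      by_contra hcon
      push_neg at hcon
      set M' : ℤ := ⌈(ε + (M : ℝ) * |t|) / |t'|⌉ with hM'
      have hmaps : Set.MapsTo (fun k => (m k, n k)) Set.univ
          (Set.Icc (-M) M ×ˢ Set.Icc (-M') M') := by
        intro k _
        have h1 := abs_le.mp (hcon k)
        have hMpos : (0:ℤ) ≤ M := le_trans (abs_nonneg _) (hcon k)
        have h2 : |(n k : ℝ) * t'| ≤ ε + (M : ℝ) * |t| := by
          have h3 : |(n k : ℝ) * t'| ≤ |(m k:ℝ) * t + (n k:ℝ) * t'| + |(m k:ℝ) * t| := by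
            have h7 := abs_sub ((m k:ℝ) * t + (n k:ℝ) * t') ((m k:ℝ) * t)
            rw [add_sub_cancel_left] at h7
            exact h7
          have h4 : |(m k:ℝ) * t| ≤ (M:ℝ) * |t| := by
            rw [abs_mul]
            apply mul_le_mul_of_nonneg_right _ (abs_nonneg t)
            exact_mod_cast (by exact_mod_cast hcon k : |(m k : ℝ)| ≤ (M:ℝ))
          linarith [le_of_lt (habs1 k)]
        have h5 : |(n k : ℝ)| ≤ (ε + (M : ℝ) * |t|) / |t'| := by
          rw [le_div_iff₀ ht'0]
          rw [abs_mul] at h2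
          linarith
        have h6 : |n k| ≤ M' := by
          have : ((ε + (M : ℝ) * |t|) / |t'|) ≤ (M' : ℝ) := Int.le_ceil _
          exact_mod_cast le_trans (by exact_mod_cast h5 : (|n k| : ℝ) ≤ _) this
        exact ⟨abs_le.mp (hcon k), abs_le.mp h6⟩
      have hfin : (Set.Icc (-M) M ×ˢ Set.Icc (-M') M').Finite :=
        (Set.finite_Icc _ _).prod (Set.finite_Icc _ _)
      obtain ⟨k, -, l, -, hkl, heq⟩ :=
        Set.infinite_univ.exists_ne_map_eq_of_mapsTo hmaps hfin
      apply hkl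
      have hzz : z k = z l := by
        simp only [hzdef]
        rw [(Prod.mk.injEq _ _ _ _).mp heq |>.1, (Prod.mk.injEq _ _ _ _).mp heq |>.2]
      exact hanti.injective (congrArg Prod.fst hzz)
    obtain ⟨k, hk⟩ := hex
    rcases lt_abs.mp hk with hk' | hk'
    · -- m k > M > 0
      have hmC : C < (m k : ℝ) := lt_trans hMC (by exact_mod_cast hk')
      have hn := sign ε B (m k) (n k) (habs1 k) (by rw [hC] at hmC; exact hmC)
      refine ⟨m k, -(n k), lt_trans hMB hk', by omega, ?_⟩
      have : m k • a - (-(n k)) • b = z k := by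
        simp only [hzdef, neg_zsmul, sub_neg_eq_add]
      rw [this]; exact hnorm k
    · -- -(m k) > M
      have hmC : C < ((-(m k) : ℤ) : ℝ) := lt_trans hMC (by exact_mod_cast hk')
      have habs' : |((-(m k) : ℤ) : ℝ) * t + ((-(n k) : ℤ) : ℝ) * t'| < ε := by
        push_cast
        rw [show -(m k : ℝ) * t + -(n k : ℝ) * t' = -((m k:ℝ) * t + (n k:ℝ) * t') by ring,
          abs_neg]
        exact habs1 k
      have hn := sign ε B (-(m k)) (-(n k)) habs' (by rw [hC] at hmC; exact hmC)
      refine ⟨-(m k), n k, lt_trans hMB hk', by omega, ?_⟩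
      have : (-(m k)) • a - (n k) • b = -(z k) := by
        simp only [hzdef, neg_zsmul]
        abel
      rw [this, norm_neg]; exact hnorm k
  -- main argument
  rw [Metric.dense_iff]
  intro x r hr
  obtain ⟨g, hgball, m0, n0, hg⟩ := Metric.dense_iff.mp hdense x (r / 2) (by positivity)
  obtain ⟨p, q, hp, hq, hpq⟩ := key (r / 2) (by positivity) (max |m0| |n0|)
  refine ⟨g + (p • a - q • b), ?_, m0 + p, q - n0, ?_, ?_, ?_⟩
  · rw [Metric.mem_ball]
    calc dist (g + (p • a - q • b)) x ≤ dist (g + (p • a - q • b)) g + dist g x :=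
          dist_triangle _ _ _
      _ < r / 2 + r / 2 := by
          apply add_lt_add _ (Metric.mem_ball.mp hgball)
          rw [dist_eq_norm, add_sub_cancel_left]; exact hpq
      _ = r := by ring
  · have h1 : |m0| < p := lt_of_le_of_lt (le_max_left _ _) hp
    have h2 := neg_abs_le m0
    omega
  · have h1 : |n0| < q := lt_of_le_of_lt (le_max_right _ _) hq
    have h2 := le_abs_self n0
    omega
  · rw [hg, add_zsmul, sub_zsmul]
    abel
end

section
/- Let {J_α}, {J'_α}, α ∈ A (A finite), be families of subsets of ℂ, with centers c_α, c'_α ∈ ℂ and constants λ, ε, ν > 0 such that B(c_α, ε) ⊆ J_α ⊆ B(c_α, λε), B(c'_α, ε) ⊆ J'_α, and |c_α − c'_α| ≤ νε for all α. Then Leb(∪_α J'_α) ≥ (1/(9(λ+ν)²))·Leb(∪_α J_α). -/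
open Metric MeasureTheory

/-- Comparison of measures of unions of comparable families of sets (lemma `lem:pb`,
first inequality). -/
theorem stmt_7 {A : Type*} [Fintype A] (J J' : A → Set ℂ) (c c' : A → ℂ)
    (lam eps nu : ℝ) (hlam : 0 < lam) (heps : 0 < eps) (hnu : 0 < nu)
    (h1 : ∀ α, ball (c α) eps ⊆ J α) (h2 : ∀ α, J α ⊆ ball (c α) (lam * eps))
    (h3 : ∀ α, ball (c' α) eps ⊆ J' α) (h4 : ∀ α, dist (c α) (c' α) ≤ nu * eps) :
    ENNReal.ofReal (1 / (9 * (lam + nu) ^ 2)) * volume (⋃ α, J α) ≤ volume (⋃ α, J' α) := by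
  rcases isEmpty_or_nonempty A with hA | hA
  · simp
  set K : ℝ := lam + nu with hK
  have hKpos : 0 < K := by positivity
  -- lam ≥ 1
  have hlam1 : 1 ≤ lam := by
    by_contra h
    push_neg at h
    obtain ⟨α⟩ := hA
    set m : ℝ := (lam * eps + eps) / 2 with hm
    have hm1 : lam * eps < m := by
      rw [hm]; nlinarith
    have hm2 : m < eps := by
      rw [hm]; nlinarith
    have hmem : (c α + (m : ℂ)) ∈ ball (c α) eps := by
      simp [mem_ball, dist_self_add_left, Complex.norm_real, abs_of_pos (by nlinarith : (0:ℝ) < m), hm2]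
    have := (h2 α) ((h1 α) hmem)
    rw [mem_ball, dist_self_add_left, Complex.norm_real, Real.norm_eq_abs,
      abs_of_pos (by nlinarith : (0:ℝ) < m)] at this
    linarith
  have hK1 : 1 ≤ K := by linarith
  have hεK : eps ≤ K * eps := by nlinarith
  -- key estimate for every τ > 3
  have key : ∀ τ : ℝ, τ ∈ Set.Ioi (3:ℝ) →
      ENNReal.ofReal (1 / (τ ^ 2 * K ^ 2)) * volume (⋃ α, J α) ≤ volume (⋃ α, J' α) := by
    intro τ hτ
    rw [Set.mem_Ioi] at hτ
    have hτ0 : 0 < τ := by linarith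
    obtain ⟨u, -, hdisj, hcover⟩ :=
      Vitali.exists_disjoint_subfamily_covering_enlargement_closedBall Set.univ c'
        (fun _ => K * eps) (K * eps) (fun a _ => le_rfl) τ hτ
    set s : Finset A := (u.toFinite).toFinset with hs
    have hmem_s : ∀ b, b ∈ s ↔ b ∈ u := fun b => (u.toFinite).mem_toFinset
    -- J α ⊆ closedBall (c' α) (K * eps)
    have hJcb : ∀ α, J α ⊆ closedBall (c' α) (K * eps) := by
      intro α
      refine (h2 α).trans ((ball_subset_ball' ?_).trans ball_subset_closedBall)
      have := h4 α
      rw [hK]; nlinarith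
    -- covering inclusion
    have hincl : (⋃ α, J α) ⊆ ⋃ b ∈ s, closedBall (c' b) (τ * (K * eps)) := by
      refine Set.iUnion_subset fun α => ?_
      obtain ⟨b, hb, hsub⟩ := hcover α (Set.mem_univ α)
      exact fun x hx => Set.mem_biUnion ((hmem_s b).2 hb) (hsub (hJcb α hx))
    have hball : ∀ b : A, volume (closedBall (c' b) (τ * (K * eps)))
        = ENNReal.ofReal (τ ^ 2 * K ^ 2) * volume (ball (c' b) eps) := by
      intro b
      have hsq : (τ * (K * eps)) ^ 2 = τ ^ 2 * K ^ 2 * eps ^ 2 := by ring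
      rw [Measure.addHaar_closedBall volume _ (by positivity),
        Measure.addHaar_ball volume _ heps.le, Complex.finrank_real_complex, hsq,
        ENNReal.ofReal_mul (by positivity), mul_assoc]
    have hdisj' : (↑s : Set A).PairwiseDisjoint (fun b => ball (c' b) eps) := by
      have hcoe : (↑s : Set A) = u := (u.toFinite).coe_toFinset
      rw [hcoe]
      exact hdisj.mono fun b => (ball_subset_ball hεK).trans ball_subset_closedBall
    calc ENNReal.ofReal (1 / (τ ^ 2 * K ^ 2)) * volume (⋃ α, J α)
        ≤ ENNReal.ofReal (1 / (τ ^ 2 * K ^ 2)) *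
            volume (⋃ b ∈ s, closedBall (c' b) (τ * (K * eps))) := by
          exact mul_le_mul_right (measure_mono hincl) _
      _ ≤ ENNReal.ofReal (1 / (τ ^ 2 * K ^ 2)) *
            ∑ b ∈ s, volume (closedBall (c' b) (τ * (K * eps))) := by
          exact mul_le_mul_right (measure_biUnion_finset_le s _) _
      _ = ENNReal.ofReal (1 / (τ ^ 2 * K ^ 2)) * (ENNReal.ofReal (τ ^ 2 * K ^ 2) *
            ∑ b ∈ s, volume (ball (c' b) eps)) := by
          congr 1
          rw [Finset.mul_sum]
          exact Finset.sum_congr rfl fun b _ => hball b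
      _ = ∑ b ∈ s, volume (ball (c' b) eps) := by
          rw [← mul_assoc, ← ENNReal.ofReal_mul (by positivity),
            one_div, inv_mul_cancel₀ (by positivity), ENNReal.ofReal_one, one_mul]
      _ = volume (⋃ b ∈ s, ball (c' b) eps) :=
          (measure_biUnion_finset hdisj' fun b _ => measurableSet_ball).symm
      _ ≤ volume (⋃ α, J' α) := by
          refine measure_mono (Set.iUnion₂_subset fun b _ => (h3 b).trans ?_)
          exact Set.subset_iUnion J' b
  -- take the limit τ → 3⁺
  have htend : Filter.Tendsto
      (fun τ : ℝ => ENNReal.ofReal (1 / (τ ^ 2 * K ^ 2)) * volume (⋃ α, J α))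
      (nhdsWithin 3 (Set.Ioi 3))
      (nhds (ENNReal.ofReal (1 / (9 * K ^ 2)) * volume (⋃ α, J α))) := by
    have hc : ContinuousAt (fun τ : ℝ => 1 / (τ ^ 2 * K ^ 2)) 3 :=
      ContinuousAt.div continuousAt_const (by fun_prop) (by positivity)
    have h9 : ((3:ℝ) ^ 2 * K ^ 2) = 9 * K ^ 2 := by ring
    have ht' : Filter.Tendsto (fun τ : ℝ => ENNReal.ofReal (1 / (τ ^ 2 * K ^ 2)))
        (nhdsWithin 3 (Set.Ioi 3)) (nhds (ENNReal.ofReal (1 / (9 * K ^ 2)))) := by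
      have := (ENNReal.continuous_ofReal.continuousAt.comp hc).tendsto
      simp only [Function.comp] at this
      rw [h9] at this
      exact this.mono_left nhdsWithin_le_nhds
    refine ENNReal.Tendsto.mul_const ht' (Or.inl ?_)
    exact (ENNReal.ofReal_pos.2 (by positivity)).ne'
  exact le_of_tendsto htend (eventually_nhdsWithin_of_forall key)
end

section
/- Let {J_α}, {K_α}, α ∈ A (A finite), be families of subsets of ℂ, with centers c_α and constants λ, ε, σ > 0 satisfying B(c_α, ε) ⊆ J_α ⊆ B(c_α, λε), K_α ⊆ J_α, and Leb(K_α) ≥ σ⁻¹·Leb(J_α) for all α. Then Leb(∪_α K_α) ≥ (σ⁻¹/(9λ²))·Leb(∪_α J_α). -/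
open Metric MeasureTheory

/-- Comparison of measures of unions (lemma `lem:pb`, second inequality): if each `K_α`
fills a fixed proportion of `J_α`, the union of the `K_α` fills a fixed proportion of the
union of the `J_α`. -/
theorem stmt_8 {A : Type*} [Fintype A] (J K : A → Set ℂ) (c : A → ℂ)
    (lam eps sig : ℝ) (hlam : 0 < lam) (heps : 0 < eps) (hsig : 0 < sig)
    (h1 : ∀ α, ball (c α) eps ⊆ J α) (h2 : ∀ α, J α ⊆ ball (c α) (lam * eps))
    (h3 : ∀ α, K α ⊆ J α)
    (h4 : ∀ α, ENNReal.ofReal sig⁻¹ * volume (J α) ≤ volume (K α)) :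
    ENNReal.ofReal (sig⁻¹ / (9 * lam ^ 2)) * volume (⋃ α, J α) ≤ volume (⋃ α, K α) := by
  -- From h4 deduce volume (J α) ≤ ofReal sig * volume (K α)
  have hJK : ∀ α, volume (J α) ≤ ENNReal.ofReal sig * volume (K α) := by
    intro α
    have h := mul_le_mul_right (h4 α) (ENNReal.ofReal sig)
    calc volume (J α) = ENNReal.ofReal sig * (ENNReal.ofReal sig⁻¹ * volume (J α)) := by
          rw [← mul_assoc, ← ENNReal.ofReal_mul hsig.le, mul_inv_cancel₀ hsig.ne',
            ENNReal.ofReal_one, one_mul]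
      _ ≤ ENNReal.ofReal sig * volume (K α) := h
  have key : ∀ τ : ℝ, 3 < τ →
      volume (⋃ α, J α) ≤ ENNReal.ofReal (sig * (τ * lam) ^ 2) * volume (⋃ α, K α) := by
    intro τ hτ
    obtain ⟨u, -, hdisj, hcov⟩ :=
      Vitali.exists_disjoint_subfamily_covering_enlargement_closedBall (Set.univ : Set A)
        c (fun _ => lam * eps) (lam * eps) (fun _ _ => le_rfl) τ hτ
    classical
    set t : Finset A := u.toFinite.toFinset with ht
    have htu : (t : Set A) = u := u.toFinite.coe_toFinset
    -- covering step
    have hcover : (⋃ α, J α) ⊆ ⋃ b ∈ t, closedBall (c b) (τ * (lam * eps)) := by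
      intro x hx
      obtain ⟨α, hα⟩ := Set.mem_iUnion.1 hx
      obtain ⟨b, hb, hsub⟩ := hcov α (Set.mem_univ α)
      refine Set.mem_biUnion ?_ (hsub (ball_subset_closedBall (h2 α hα)))
      rw [← htu] at hb; exact hb
    -- each big closed ball is controlled by K b
    have hball : ∀ b, volume (closedBall (c b) (τ * (lam * eps)))
        ≤ ENNReal.ofReal (sig * (τ * lam) ^ 2) * volume (K b) := by
      intro b
      have hτl : (0:ℝ) ≤ τ * lam := by positivity
      calc volume (closedBall (c b) (τ * (lam * eps)))
          = ENNReal.ofReal (τ * (lam * eps)) ^ 2 * NNReal.pi := Complex.volume_closedBall _ _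
        _ = ENNReal.ofReal ((τ * lam) ^ 2) * (ENNReal.ofReal eps ^ 2 * NNReal.pi) := by
            rw [show τ * (lam * eps) = (τ * lam) * eps by ring,
              ENNReal.ofReal_mul hτl, mul_pow, ENNReal.ofReal_pow hτl, mul_assoc]
        _ = ENNReal.ofReal ((τ * lam) ^ 2) * volume (ball (c b) eps) := by
            rw [Complex.volume_ball]
        _ ≤ ENNReal.ofReal ((τ * lam) ^ 2) * volume (J b) :=
            mul_le_mul_right (measure_mono (h1 b)) _
        _ ≤ ENNReal.ofReal ((τ * lam) ^ 2) * (ENNReal.ofReal sig * volume (K b)) := by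
            gcongr; exact hJK b
        _ = ENNReal.ofReal (sig * (τ * lam) ^ 2) * volume (K b) := by
            rw [← mul_assoc, ← ENNReal.ofReal_mul (by positivity), mul_comm ((τ*lam)^2) sig]
    -- sum of K-volumes over disjoint balls is at most volume of the union
    have hsum : ∑ b ∈ t, volume (K b) ≤ volume (⋃ α, K α) := by
      set ν := volume.restrict (⋃ α, K α) with hν
      calc ∑ b ∈ t, volume (K b)
          ≤ ∑ b ∈ t, ν (closedBall (c b) (lam * eps)) := by
            refine Finset.sum_le_sum fun b _ => ?_
            rw [hν, Measure.restrict_apply measurableSet_closedBall]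
            refine measure_mono fun x hx => ⟨ball_subset_closedBall ((h2 b) (h3 b hx)),
              Set.mem_iUnion.2 ⟨b, hx⟩⟩
        _ = ν (⋃ b ∈ t, closedBall (c b) (lam * eps)) := by
            refine (measure_biUnion_finset ?_ fun _ _ => measurableSet_closedBall).symm
            rw [htu]; exact hdisj
        _ ≤ ν Set.univ := measure_mono (Set.subset_univ _)
        _ = volume (⋃ α, K α) := by rw [hν, Measure.restrict_apply_univ]
    calc volume (⋃ α, J α)
        ≤ volume (⋃ b ∈ t, closedBall (c b) (τ * (lam * eps))) := measure_mono hcover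
      _ ≤ ∑ b ∈ t, volume (closedBall (c b) (τ * (lam * eps))) := measure_biUnion_finset_le t _
      _ ≤ ∑ b ∈ t, ENNReal.ofReal (sig * (τ * lam) ^ 2) * volume (K b) :=
          Finset.sum_le_sum fun b _ => hball b
      _ = ENNReal.ofReal (sig * (τ * lam) ^ 2) * ∑ b ∈ t, volume (K b) := by
          rw [Finset.mul_sum]
      _ ≤ ENNReal.ofReal (sig * (τ * lam) ^ 2) * volume (⋃ α, K α) := by gcongr
  -- pass to the limit τ → 3⁺
  have hlim : volume (⋃ α, J α) ≤ ENNReal.ofReal (sig * (3 * lam) ^ 2) * volume (⋃ α, K α) := by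
    rcases eq_top_or_lt_top (volume (⋃ α, K α)) with htop | hfin
    · rw [htop, ENNReal.mul_top (by positivity)]
      exact le_top
    · haveI : (nhdsWithin (3:ℝ) (Set.Ioi 3)).NeBot := nhdsGT_neBot 3
      refine ge_of_tendsto (x := nhdsWithin (3:ℝ) (Set.Ioi 3))
          (f := fun τ : ℝ => ENNReal.ofReal (sig * (τ * lam) ^ 2) * volume (⋃ α, K α)) ?_ ?_
      · have hc : Filter.Tendsto (fun τ : ℝ => ENNReal.ofReal (sig * (τ * lam) ^ 2))
            (nhdsWithin 3 (Set.Ioi 3)) (nhds (ENNReal.ofReal (sig * (3 * lam) ^ 2))) := by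
          refine (ENNReal.continuous_ofReal.tendsto _).comp ?_
          exact (Filter.Tendsto.mono_left (Continuous.tendsto (by continuity) 3)
            nhdsWithin_le_nhds)
        exact ENNReal.Tendsto.mul_const hc (Or.inr hfin.ne)
      · filter_upwards [self_mem_nhdsWithin] with τ hτ using key τ hτ
  calc ENNReal.ofReal (sig⁻¹ / (9 * lam ^ 2)) * volume (⋃ α, J α)
      ≤ ENNReal.ofReal (sig⁻¹ / (9 * lam ^ 2)) *
          (ENNReal.ofReal (sig * (3 * lam) ^ 2) * volume (⋃ α, K α)) := by gcongr
    _ = volume (⋃ α, K α) := by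
        rw [← mul_assoc, ← ENNReal.ofReal_mul (by positivity),
          show sig⁻¹ / (9 * lam ^ 2) * (sig * (3 * lam) ^ 2) = 1 by
            have h9 : (9:ℝ) * lam ^ 2 ≠ 0 := by positivity
            field_simp
            norm_num, ENNReal.ofReal_one, one_mul]
end

section
/- Projection-slicing estimate: fix R > 0 and let J_R = { s ∈ ℂ : e^{−R} ≤ |s| ≤ e^{R} }. For s ∈ ℂ define π_s : ℂ² → ℂ by π_s(u₁,u₂) = u₂ − s·u₁. Then there is a constant c > 0 depending only on R such that for all u, v ∈ ℂ² with u ≠ v and all δ > 0, Leb({ s ∈ J_R : |π_s(u) − π_s(v)| < δ }) ≤ c·δ²·|u − v|⁻², where Leb is planar Lebesgue measure on ℂ. -/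
open MeasureTheory

/-- Transversality/slicing estimate for the family of projections
`π_s(u₁,u₂) = u₂ − s·u₁`, `s` in the annulus `J_R`. -/
theorem stmt_10 (R : ℝ) (hR : 0 < R) :
    ∃ c : ℝ, 0 < c ∧ ∀ (u v : ℂ × ℂ), u ≠ v → ∀ δ : ℝ, 0 < δ →
      volume {s : ℂ | (Real.exp (-R) ≤ ‖s‖ ∧ ‖s‖ ≤ Real.exp R) ∧
          ‖(u.2 - s * u.1) - (v.2 - s * v.1)‖ < δ}
        ≤ ENNReal.ofReal (c * δ ^ 2 /
            (‖u.1 - v.1‖ ^ 2 + ‖u.2 - v.2‖ ^ 2)) := by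
  set E := Real.exp R with hE
  have hE1 : 1 ≤ E := Real.one_le_exp hR.le
  refine ⟨Real.pi * E ^ 2 * (1 + (1 + E) ^ 2), by positivity, ?_⟩
  intro u v huv δ hδ
  set a := u.1 - v.1 with ha
  set b := u.2 - v.2 with hb
  set A := ‖a‖ with hA
  set B := ‖b‖ with hB
  have hD : 0 < A ^ 2 + B ^ 2 := by
    rcases eq_or_ne a 0 with h0 | h0
    · have hbne : b ≠ 0 := by
        intro h
        apply huv
        have h1 : u.1 = v.1 := by rwa [ha, sub_eq_zero] at h0
        have h2 : u.2 = v.2 := by rwa [hb, sub_eq_zero] at h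
        exact Prod.ext h1 h2
      have : 0 < B := by simpa [hB] using (norm_pos_iff.mpr hbne)
      positivity
    · have : 0 < A := by simpa [hA] using (norm_pos_iff.mpr h0)
      positivity
  set S := {s : ℂ | (Real.exp (-R) ≤ ‖s‖ ∧ ‖s‖ ≤ E) ∧
      ‖(u.2 - s * u.1) - (v.2 - s * v.1)‖ < δ} with hSdef
  have hkey : ∀ s ∈ S, ‖b - s * a‖ < δ ∧ ‖s‖ ≤ E := by
    intro s hs
    refine ⟨?_, hs.1.2⟩
    have : (u.2 - s * u.1) - (v.2 - s * v.1) = b - s * a := by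
      rw [ha, hb]; ring
    rw [← this]; exact hs.2
  rcases Set.eq_empty_or_nonempty S with hS | ⟨s₀, hs₀⟩
  · rw [show S = ∅ from hS]; simp
  -- bound on B
  have hs₀' := hkey s₀ hs₀
  have hBbound : B < δ + E * A := by
    have h1 : B ≤ ‖b - s₀ * a‖ + ‖s₀ * a‖ := by
      calc B = ‖(b - s₀ * a) + s₀ * a‖ := by rw [hB]; ring_nf
      _ ≤ _ := norm_add_le _ _
    have h2 : ‖s₀ * a‖ ≤ E * A := by
      rw [norm_mul]
      exact mul_le_mul_of_nonneg_right hs₀'.2 (norm_nonneg a)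
    linarith [hs₀'.1]
  have hπ : (NNReal.pi : ENNReal) = ENNReal.ofReal Real.pi := by
    rw [← ENNReal.ofReal_coe_nnreal, NNReal.coe_real_pi]
  by_cases hcase : A ≤ δ
  · -- S ⊆ closedBall 0 E
    have hsub : S ⊆ Metric.closedBall (0 : ℂ) E := by
      intro s hs
      simpa [Metric.mem_closedBall, Complex.dist_eq] using (hkey s hs).2
    have hvol : volume S ≤ ENNReal.ofReal (E ^ 2 * Real.pi) := by
      calc volume S ≤ volume (Metric.closedBall (0 : ℂ) E) := measure_mono hsub
      _ = ENNReal.ofReal E ^ 2 * NNReal.pi := Complex.volume_closedBall 0 E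
      _ = ENNReal.ofReal (E ^ 2 * Real.pi) := by
          rw [hπ, ← ENNReal.ofReal_pow (by positivity), ← ENNReal.ofReal_mul (by positivity)]
    refine hvol.trans (ENNReal.ofReal_le_ofReal ?_)
    rw [le_div_iff₀ hD]
    have hB2 : B ^ 2 ≤ ((1 + E) * δ) ^ 2 := by
      have : B ≤ (1 + E) * δ := by nlinarith
      nlinarith [norm_nonneg b]
    have hA2 : A ^ 2 ≤ δ ^ 2 := pow_le_pow_left₀ (norm_nonneg a) hcase 2
    have hsum : A ^ 2 + B ^ 2 ≤ (1 + (1 + E) ^ 2) * δ ^ 2 := by nlinarith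
    have h2 := mul_le_mul_of_nonneg_left hsum
      (show (0:ℝ) ≤ Real.pi * E ^ 2 by positivity)
    nlinarith [h2]
  · push_neg at hcase
    have hA0 : 0 < A := lt_trans hδ hcase
    have hane : a ≠ 0 := by
      intro h; rw [ha] at h; rw [hA, ha, h] at hA0; simp at hA0
    have hsub : S ⊆ Metric.ball (b / a) (δ / A) := by
      intro s hs
      rw [Metric.mem_ball, Complex.dist_eq]
      have : s - b / a = -(b - s * a) / a := by field_simp; ring
      rw [this, norm_div, norm_neg]
      have h1 := (hkey s hs).1
      have : ‖a‖ = A := rfl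
      rw [this]
      exact div_lt_div_of_pos_right h1 hA0
    have hvol : volume S ≤ ENNReal.ofReal ((δ / A) ^ 2 * Real.pi) := by
      calc volume S ≤ volume (Metric.ball (b / a) (δ / A)) := measure_mono hsub
      _ = ENNReal.ofReal (δ / A) ^ 2 * NNReal.pi := Complex.volume_ball _ _
      _ = ENNReal.ofReal ((δ / A) ^ 2 * Real.pi) := by
          rw [hπ, ← ENNReal.ofReal_pow (by positivity), ← ENNReal.ofReal_mul (by positivity)]
    refine hvol.trans (ENNReal.ofReal_le_ofReal ?_)
    rw [le_div_iff₀ hD, div_pow, div_mul_eq_mul_div, div_mul_eq_mul_div,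
      div_le_iff₀ (by positivity)]
    have hB2 : B ^ 2 ≤ ((1 + E) * A) ^ 2 := by
      have : B ≤ (1 + E) * A := by nlinarith
      nlinarith [norm_nonneg b]
    have hsum : A ^ 2 + B ^ 2 ≤ (1 + (1 + E) ^ 2) * A ^ 2 := by nlinarith
    have h2 := mul_le_mul_of_nonneg_left hsum
      (show (0:ℝ) ≤ Real.pi * δ ^ 2 by positivity)
    have h3 : 0 ≤ (E ^ 2 - 1) * (Real.pi * (1 + (1 + E) ^ 2) * δ ^ 2 * A ^ 2) :=
      mul_nonneg (by nlinarith) (by positivity)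
    nlinarith [h2, h3]
end
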